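/- arXiv:1007.5033 — 6 statements merged into one kernel-verified Lean document; each statement's English description precedes it below -/
import Mathlib

section
/- (Pólya's inequality) For every compact set K ⊂ ℝ and every monic real polynomial P of degree n, sup_{x ∈ K} |P(x)| ≥ |K|^n / 2^(2n-1), where |K| denotes the Lebesgue measure of K. -/
open Polynomial MeasureTheory Finset


lemma chebT_natDegree_le (m : ℕ) : (Polynomial.Chebyshev.T ℝ m).natDegree ≤ m := by
  induction m using Nat.twoStepInduction with
  | zero => simp [Polynomial.Chebyshev.T_zero]
  | one => simp [Polynomial.Chebyshev.T_one]
  | more m ih1 ih2 =>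
    have h : ((m + 2 : ℕ) : ℤ) = ((m:ℤ) + 2) := by push_cast; ring
    rw [h, Polynomial.Chebyshev.T_add_two]
    refine le_trans (natDegree_sub_le _ _) ?_
    have h1 : (2 * X * Polynomial.Chebyshev.T ℝ ((m:ℤ)+1)).natDegree ≤ m + 2 := by
      refine le_trans (natDegree_mul_le) ?_
      have hc : ((m:ℤ)+1) = ((m+1 : ℕ) : ℤ) := by push_cast; ring
      rw [hc]
      have h2 : (2 * X : ℝ[X]).natDegree ≤ 1 := le_trans natDegree_mul_le (by simp)
      omega
    have h3 : (Polynomial.Chebyshev.T ℝ (m:ℤ)).natDegree ≤ m + 2 := le_trans ih1 (by omega)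
    simp [h1, h3]

lemma chebT_coeff (m : ℕ) : (Polynomial.Chebyshev.T ℝ ((m:ℤ)+1)).coeff (m+1) = 2 ^ m := by
  induction m using Nat.twoStepInduction with
  | zero => simp [Polynomial.Chebyshev.T_one]
  | one =>
    rw [show (((1:ℕ):ℤ)+1) = 2 by norm_num, Polynomial.Chebyshev.T_two]
    rw [coeff_sub, coeff_ofNat_mul, coeff_X_pow]
    norm_num [coeff_one]
  | more m ih1 ih2 =>
    have h : (((m+2:ℕ)):ℤ) + 1 = ((m:ℤ) + 1) + 2 := by push_cast; ring
    rw [h, Polynomial.Chebyshev.T_add_two]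
    rw [coeff_sub]
    have h2 : (2 * X * Polynomial.Chebyshev.T ℝ ((m:ℤ)+1+1)).coeff (m+2+1) =
        2 * (Polynomial.Chebyshev.T ℝ ((m:ℤ)+1+1)).coeff (m+2) := by
      rw [mul_assoc, coeff_ofNat_mul, coeff_X_mul]
    have h3 : (Polynomial.Chebyshev.T ℝ ((m:ℤ)+1)).coeff (m+2+1) = 0 := by
      apply coeff_eq_zero_of_natDegree_lt
      have : ((m:ℤ)+1) = ((m+1:ℕ):ℤ) := by push_cast; ring
      rw [this]
      exact lt_of_le_of_lt (chebT_natDegree_le (m+1)) (by omega)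
    have h4 : ((m:ℤ)+1+1) = ((m+1:ℕ):ℤ)+1 := by push_cast; ring
    rw [h2, h3, sub_zero, h4, show (m+2) = (m+1)+1 from rfl, ih2]
    ring


lemma coeff_comp_linear (p : ℝ[X]) (n : ℕ) (hp : p.natDegree ≤ n) (a b : ℝ) (ha : a ≠ 0) :
    (p.comp (C a * X + C b)).coeff n = p.coeff n * a ^ n := by
  set q : ℝ[X] := C a * X + C b with hq
  have hqdeg : q.natDegree = 1 := by
    rw [hq]; exact natDegree_linear ha
  have hqlc : q.leadingCoeff = a := by
    rw [hq]; exact leadingCoeff_linear ha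
  rw [comp_eq_sum_left, Polynomial.sum, finset_sum_coeff]
  rw [Finset.sum_eq_single n]
  · rw [coeff_C_mul]
    congr 1
    have h1 : (q ^ n).natDegree = n := by
      rw [natDegree_pow, hqdeg, mul_one]
    have h2 := coeff_natDegree (p := q ^ n)
    rw [h1] at h2
    rw [h2, leadingCoeff_pow, hqlc]
  · intro k hk hkn
    rw [coeff_C_mul]
    have : (q ^ k).coeff n = 0 := by
      apply coeff_eq_zero_of_natDegree_lt
      rw [natDegree_pow, hqdeg, mul_one]
      rcases lt_or_ge k n with h | h
      · exact h
      · exact absurd (le_antisymm (le_trans (le_natDegree_of_mem_supp k hk) hp) h) hkn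
    rw [this, mul_zero]
  · intro hn
    rw [notMem_support_iff.mp hn, C_0, zero_mul, coeff_zero]

lemma coeff_interpolate (n : ℕ) (v : ℕ → ℝ) (hv : Set.InjOn v (range (n+1)))
    (f : ℝ[X]) (hf : f.natDegree ≤ n) :
    f.coeff n = ∑ i ∈ range (n+1), f.eval (v i) * Lagrange.nodalWeight (range (n+1)) v i := by
  have hcard : #(range (n+1)) = n + 1 := card_range _
  have hdeg : f.degree < #(range (n+1)) := by
    rw [hcard]
    exact lt_of_le_of_lt degree_le_natDegree (by exact_mod_cast Nat.lt_succ_of_le hf)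
  have heq := Lagrange.eq_interpolate hv hdeg
  conv_lhs => rw [heq]
  rw [Lagrange.interpolate_apply, finset_sum_coeff]
  apply Finset.sum_congr rfl
  intro i hi
  rw [coeff_C_mul]
  congr 1
  have hb : (Lagrange.basis (range (n+1)) v i).natDegree = n := by
    rw [Lagrange.natDegree_basis hv hi, hcard]; omega
  have h2 := coeff_natDegree (p := Lagrange.basis (range (n+1)) v i)
  rw [hb] at h2
  rw [h2, Lagrange.basis, leadingCoeff_prod]
  rw [Lagrange.nodalWeight]
  apply Finset.prod_congr rfl
  intro j hj
  have hij : v i ≠ v j := by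
    intro h
    exact (Finset.ne_of_mem_erase hj) (hv (Finset.mem_of_mem_erase hj) hi h.symm)
  rw [Lagrange.basisDivisor, leadingCoeff_mul, leadingCoeff_C, (monic_X_sub_C (v j)).leadingCoeff, mul_one]


lemma polya_F_lip (K : Set ℝ) (hK : IsCompact K) {a b : ℝ} (hab : a ≤ b) :
    (volume (K ∩ Set.Iic b)).toReal - (volume (K ∩ Set.Iic a)).toReal ≤ b - a ∧
    (volume (K ∩ Set.Iic a)).toReal ≤ (volume (K ∩ Set.Iic b)).toReal := by
  have hKm : MeasurableSet K := hK.isClosed.measurableSet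
  have hfin : volume K ≠ ⊤ := hK.measure_lt_top.ne
  have hfa : volume (K ∩ Set.Iic a) ≠ ⊤ :=
    (lt_of_le_of_lt (measure_mono Set.inter_subset_left) hK.measure_lt_top).ne
  have hfb : volume (K ∩ Set.Iic b) ≠ ⊤ :=
    (lt_of_le_of_lt (measure_mono Set.inter_subset_left) hK.measure_lt_top).ne
  have hsplit : K ∩ Set.Iic b = (K ∩ Set.Iic a) ∪ (K ∩ Set.Ioc a b) := by
    rw [← Set.inter_union_distrib_left, Set.Iic_union_Ioc_eq_Iic hab]
  have hdisj : Disjoint (K ∩ Set.Iic a) (K ∩ Set.Ioc a b) := by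
    apply Set.disjoint_of_subset Set.inter_subset_right Set.inter_subset_right
    rw [Set.disjoint_left]
    intro z hz1 hz2
    exact absurd hz1 (not_le.mpr hz2.1)
  have hmeas : volume (K ∩ Set.Iic b) = volume (K ∩ Set.Iic a) + volume (K ∩ Set.Ioc a b) := by
    rw [hsplit, measure_union hdisj (hKm.inter measurableSet_Ioc)]
  have hioc : volume (K ∩ Set.Ioc a b) ≠ ⊤ :=
    (lt_of_le_of_lt (measure_mono Set.inter_subset_left) hK.measure_lt_top).ne
  constructor
  · rw [hmeas, ENNReal.toReal_add hfa hioc]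
    have h1 : (volume (K ∩ Set.Ioc a b)).toReal ≤ (volume (Set.Ioc a b)).toReal := by
      apply ENNReal.toReal_mono (by simp) (measure_mono Set.inter_subset_right)
    simp only [Real.volume_Ioc] at h1
    rw [ENNReal.toReal_ofReal (by linarith)] at h1
    linarith
  · exact ENNReal.toReal_mono hfb (measure_mono (Set.inter_subset_inter_right _ (Set.Iic_subset_Iic.mpr hab)))

lemma polya_quantile (K : Set ℝ) (hK : IsCompact K) (hne : K.Nonempty)
    (c : ℝ) (hc0 : 0 ≤ c) (hcA : c ≤ (volume K).toReal) :
    ∃ x ∈ K, (volume (K ∩ Set.Iic x)).toReal = c := by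
  set F : ℝ → ℝ := fun x => (volume (K ∩ Set.Iic x)).toReal with hF
  have hFinf : F (sInf K) = 0 := by
    have hsub : K ∩ Set.Iic (sInf K) ⊆ {sInf K} := by
      intro z hz
      exact le_antisymm hz.2 (csInf_le hK.bddBelow hz.1)
    have h0 : volume (K ∩ Set.Iic (sInf K)) = 0 := by
      apply measure_mono_null hsub
      exact Real.volume_singleton
    rw [hF]; simp [h0]
  have hFsup : F (sSup K) = (volume K).toReal := by
    have : K ∩ Set.Iic (sSup K) = K := by
      apply Set.inter_eq_self_of_subset_left
      intro z hz; exact le_csSup hK.bddAbove hz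
    rw [hF]; simp [this]
  rcases eq_or_lt_of_le hc0 with h0 | h0
  · exact ⟨sInf K, hK.sInf_mem hne, by simp only [hF] at hFinf ⊢; rw [hFinf, ← h0]⟩
  · -- IVT
    have hcont : Continuous F := by
      rw [hF]
      apply LipschitzWith.continuous (K := 1)
      apply LipschitzWith.of_dist_le_mul
      intro a b
      rw [Real.dist_eq, Real.dist_eq, NNReal.coe_one, one_mul]
      rcases le_total a b with h | h
      · rw [abs_sub_comm, abs_of_nonneg (by linarith [(polya_F_lip K hK h).2]),
          abs_of_nonpos (by linarith)]
        linarith [(polya_F_lip K hK h).1]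
      · rw [abs_of_nonneg (by linarith [(polya_F_lip K hK h).2]),
          abs_of_nonneg (by linarith)]
        linarith [(polya_F_lip K hK h).1]
    have hle : sInf K ≤ sSup K := csInf_le_csSup hne hK.bddBelow hK.bddAbove
    have := intermediate_value_Icc hle hcont.continuousOn
    have hcmem : c ∈ Set.Icc (F (sInf K)) (F (sSup K)) := by
      rw [hFinf, hFsup]; exact ⟨hc0, hcA⟩
    obtain ⟨y, hy, hFy⟩ := this hcmem
    -- now push y into K
    have hKy : (K ∩ Set.Iic y).Nonempty := by
      by_contra h
      rw [Set.not_nonempty_iff_eq_empty] at h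
      rw [hF] at hFy; simp only [h] at hFy
      simp at hFy
      linarith [hFy ▸ h0]
    set x := sSup (K ∩ Set.Iic y) with hx
    have hKyc : IsCompact (K ∩ Set.Iic y) := hK.inter_right isClosed_Iic
    have hxmem := hKyc.sSup_mem hKy
    refine ⟨x, hxmem.1, ?_⟩
    have hxy : x ≤ y := hxmem.2
    have hempty : K ∩ Set.Ioc x y = ∅ := by
      rw [Set.eq_empty_iff_forall_notMem]
      intro z ⟨hz1, hz2⟩
      exact absurd (le_csSup hKyc.bddAbove ⟨hz1, hz2.2⟩) (not_le.mpr hz2.1)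
    have hsets : K ∩ Set.Iic y = K ∩ Set.Iic x := by
      rw [← Set.Iic_union_Ioc_eq_Iic hxy, Set.inter_union_distrib_left, hempty, Set.union_empty]
    rw [hF] at hFy
    simp only at hFy
    rw [← hsets]
    exact hFy


lemma polya_prod_sign (n : ℕ) (g : ℕ → ℝ) (hg : ∀ i j, i < j → j ≤ n → g j < g i)
    (i : ℕ) (hi : i ≤ n) :
    0 < (-1:ℝ)^i * ∏ j ∈ (range (n+1)).erase i, (g i - g j) := by
  have hsplit : (range (n+1)).erase i = range i ∪ Ico (i+1) (n+1) := by
    ext j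
    simp only [mem_erase, mem_range, mem_union, mem_Ico]
    omega
  have hdisj : Disjoint (range i) (Ico (i+1) (n+1)) := by
    rw [Finset.disjoint_left]
    intro j hj1 hj2
    simp only [mem_range] at hj1
    simp only [mem_Ico] at hj2
    omega
  rw [hsplit, Finset.prod_union hdisj]
  have h1 : ∏ j ∈ range i, (g i - g j) = (-1:ℝ)^i * ∏ j ∈ range i, (g j - g i) := by
    have : ∀ j ∈ range i, g i - g j = (-1) * (g j - g i) := fun j _ => by ring
    rw [Finset.prod_congr rfl this, Finset.prod_mul_distrib, Finset.prod_const, Finset.card_range]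
  have h2 : 0 < ∏ j ∈ range i, (g j - g i) := by
    apply Finset.prod_pos
    intro j hj
    simp only [mem_range] at hj
    linarith [hg j i hj hi]
  have h3 : 0 < ∏ j ∈ Ico (i+1) (n+1), (g i - g j) := by
    apply Finset.prod_pos
    intro j hj
    simp only [mem_Ico] at hj
    linarith [hg i j (by omega) (by omega)]
  rw [h1]
  have hsq : ((-1:ℝ)^i) * ((-1:ℝ)^i) = 1 := by
    rw [← mul_pow]; norm_num
  calc (0:ℝ) < (∏ j ∈ range i, (g j - g i)) * ∏ j ∈ Ico (i+1) (n+1), (g i - g j) := mul_pos h2 h3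
  _ = (-1:ℝ)^i * (((-1:ℝ)^i * ∏ j ∈ range i, (g j - g i)) * ∏ j ∈ Ico (i+1) (n+1), (g i - g j)) := by
    rw [← mul_assoc, ← mul_assoc, hsq, one_mul]

set_option maxHeartbeats 1000000 in
/-- Pólya's inequality: for every compact `K ⊆ ℝ` and every monic real polynomial `P` of
degree `n`, `sup_{x ∈ K} |P(x)| ≥ |K|^n / 2^(2n-1)`. -/
theorem polya_inequality (K : Set ℝ) (hK : IsCompact K) (n : ℕ) (hn : 1 ≤ n)
    (P : Polynomial ℝ) (hP : P.Monic) (hdeg : P.natDegree = n) :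
    (volume K).toReal ^ n / 2 ^ (2 * n - 1) ≤ sSup ((fun x => |P.eval x|) '' K) := by
  have hcont : Continuous fun x : ℝ => |P.eval x| := P.continuous.abs
  have hbdd : BddAbove ((fun x => |P.eval x|) '' K) := (hK.image hcont).bddAbove
  set M := sSup ((fun x => |P.eval x|) '' K) with hM
  set A := (volume K).toReal with hA
  rcases eq_or_lt_of_le (ENNReal.toReal_nonneg : (0:ℝ) ≤ A) with h0 | h0
  · -- degenerate case A = 0
    rw [hA, ← h0, zero_pow (by omega), zero_div]
    rcases K.eq_empty_or_nonempty with he | hne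
    · simp [hM, he, Real.sSup_empty]
    · obtain ⟨x0, hx0⟩ := hne
      exact le_trans (abs_nonneg _) (le_csSup hbdd ⟨x0, hx0, rfl⟩)
  -- main case
  have hne : K.Nonempty := by
    by_contra h
    rw [Set.not_nonempty_iff_eq_empty] at h
    rw [h] at h0
    simp at h0
  have hAne : A ≠ 0 := ne_of_gt h0
  set π := Real.pi with hπ
  set g : ℕ → ℝ := fun i => A/2 * (1 + Real.cos (i * π / n)) with hg
  have hg_anti : ∀ i j, i < j → j ≤ n → g j < g i := by
    intro i j hij hjn
    have hcos : Real.cos (j * π / n) < Real.cos (i * π / n) := by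
      apply Real.strictAntiOn_cos
      · constructor
        · positivity
        · rw [div_le_iff₀ (by positivity)]
          calc (i:ℝ) * π ≤ n * π := by
                have : (i:ℝ) ≤ n := by exact_mod_cast le_trans (le_of_lt hij) hjn
                nlinarith [Real.pi_pos]
          _ = π * n := by ring
      · constructor
        · positivity
        · rw [div_le_iff₀ (by positivity)]
          calc (j:ℝ) * π ≤ n * π := by
                have : (j:ℝ) ≤ n := by exact_mod_cast hjn
                nlinarith [Real.pi_pos]
          _ = π * n := by ring
      · have hii : (i:ℝ) < j := by exact_mod_cast hij
        have hn0 : (0:ℝ) < n := by exact_mod_cast hn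
        exact (div_lt_div_iff_of_pos_right hn0).mpr (mul_lt_mul_of_pos_right hii Real.pi_pos)
    rw [hg]
    simp only
    nlinarith
  have h0A : (0:ℝ) < A := h0
  have hg_mem : ∀ i : ℕ, 0 ≤ g i ∧ g i ≤ A := by
    intro i
    have h1 := Real.neg_one_le_cos ((i:ℝ) * π / n)
    have h2 := Real.cos_le_one ((i:ℝ) * π / n)
    constructor <;> (rw [hg]; simp only; nlinarith)
  set F : ℝ → ℝ := fun y => (volume (K ∩ Set.Iic y)).toReal with hF
  have hxe : ∀ i : ℕ, ∃ z ∈ K, F z = g (min i n) := fun i =>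
    polya_quantile K hK hne _ (hg_mem _).1 (hg_mem _).2
  choose x hxK hxF using hxe
  have hxF' : ∀ i, i ≤ n → F (x i) = g i := fun i hi => by
    rw [hxF i, min_eq_left hi]
  have hx_lt : ∀ i j, i < j → j ≤ n → x j < x i := by
    intro i j hij hj
    by_contra h
    push_neg at h
    have hmono := (polya_F_lip K hK h).2
    have e1 := hxF' i (by omega)
    have e2 := hxF' j hj
    rw [hF] at e1 e2
    simp only at e1 e2
    rw [e1, e2] at hmono
    linarith [hg_anti i j hij hj]
  have hx_gap : ∀ i j, i < j → j ≤ n → g i - g j ≤ x i - x j := by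
    intro i j hij hj
    have hlt := hx_lt i j hij hj
    have hlip := (polya_F_lip K hK hlt.le).1
    have e1 := hxF' i (by omega)
    have e2 := hxF' j hj
    rw [hF] at e1 e2
    simp only at e1 e2
    rw [e1, e2] at hlip
    linarith
  have habs : ∀ i j, i ≤ n → j ≤ n → i ≠ j → 0 < |g i - g j| ∧ |g i - g j| ≤ |x i - x j| := by
    intro i j hi hj hij
    rcases lt_or_gt_of_ne hij with h | h
    · have h1 := hg_anti i j h hj
      have h2 := hx_gap i j h hj
      rw [abs_of_pos (by linarith), abs_of_pos (by linarith)]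
      exact ⟨by linarith, h2⟩
    · have h1 := hg_anti j i h hi
      have h2 := hx_gap j i h hi
      rw [abs_of_neg (by linarith), abs_of_neg (by linarith)]
      constructor <;> linarith
  have hxInj : Set.InjOn x (range (n+1)) := by
    intro i hi j hj hij
    simp only [coe_range, Set.mem_Iio, mem_range] at hi hj
    by_contra h
    rcases lt_or_gt_of_ne h with hlt | hlt
    · exact absurd hij (ne_of_gt (hx_lt i j hlt (by omega)))
    · exact absurd hij.symm (ne_of_gt (hx_lt j i hlt (by omega)))
  have hgInj : Set.InjOn g (range (n+1)) := by
    intro i hi j hj hij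
    simp only [coe_range, Set.mem_Iio, mem_range] at hi hj
    by_contra h
    rcases lt_or_gt_of_ne h with hlt | hlt
    · exact absurd hij (ne_of_gt (hg_anti i j hlt (by omega)))
    · exact absurd hij.symm (ne_of_gt (hg_anti j i hlt (by omega)))
  set w : ℕ → ℝ := fun i => Lagrange.nodalWeight (range (n+1)) x i with hw
  set w' : ℕ → ℝ := fun i => Lagrange.nodalWeight (range (n+1)) g i with hw'
  have habs_w : ∀ i ∈ range (n+1), |w i| ≤ |w' i| := by
    intro i hi
    simp only [mem_range] at hi
    rw [hw, hw']
    simp only [Lagrange.nodalWeight]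
    rw [Finset.abs_prod, Finset.abs_prod]
    apply Finset.prod_le_prod
    · intro j _
      positivity
    · intro j hj
      have hjn : j ≤ n := by
        have := mem_of_mem_erase hj
        simp only [mem_range] at this
        omega
      have hji : j ≠ i := ne_of_mem_erase hj
      obtain ⟨hpos, hle⟩ := habs i j (by omega) hjn (Ne.symm hji)
      rw [abs_inv, abs_inv]
      exact inv_anti₀ hpos hle
  -- P side
  have hPcoeff : (1:ℝ) = ∑ i ∈ range (n+1), P.eval (x i) * w i := by
    have h1 := coeff_interpolate n x hxInj P (le_of_eq hdeg)
    rw [← h1]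
    rw [← hdeg]
    exact (hP.coeff_natDegree).symm
  -- Chebyshev polynomial Q
  set q : ℝ[X] := C (2/A) * X + C (-1) with hq
  set Q : ℝ[X] := C (2*(A/4)^n) * ((Polynomial.Chebyshev.T ℝ (n:ℤ)).comp q) with hQ
  have hQdeg : Q.natDegree ≤ n := by
    rw [hQ]
    refine le_trans (natDegree_C_mul_le _ _) (le_trans natDegree_comp_le ?_)
    have h1 : q.natDegree = 1 := by rw [hq]; exact natDegree_linear (div_ne_zero two_ne_zero hAne)
    rw [h1, mul_one]
    exact chebT_natDegree_le n
  have hTcoeff : (Polynomial.Chebyshev.T ℝ (n:ℤ)).coeff n = 2^(n-1) := by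
    have h1 := chebT_coeff (n-1)
    have h2 : (((n-1:ℕ):ℤ)+1) = (n:ℤ) := by
      have : ((n-1:ℕ):ℤ) = (n:ℤ) - 1 := by
        push_cast [Nat.cast_sub hn]
        ring
      rw [this]; ring
    have h3 : (n-1) + 1 = n := by omega
    rw [h2, h3] at h1
    exact h1
  have hQcoeff : Q.coeff n = 1 := by
    rw [hQ, coeff_C_mul, hq,
      coeff_comp_linear _ n (chebT_natDegree_le n) (2/A) (-1) (div_ne_zero two_ne_zero hAne),
      hTcoeff]
    have h2n : (2:ℝ) * 2^(n-1) = 2^n := by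
      rw [← pow_succ']
      congr 1
      omega
    have hhalf : (A/4) * (2/A) = 1/2 := by field_simp; ring
    calc 2*(A/4)^n * (2^(n-1) * (2/A)^n)
        = (2*2^(n-1)) * ((A/4)*(2/A))^n := by rw [mul_pow]; ring
      _ = 2^n * (1/2:ℝ)^n := by rw [h2n, hhalf]
      _ = (2 * (1/2:ℝ))^n := by rw [mul_pow]
      _ = 1 := by norm_num
  have hQeval : ∀ i, i ≤ n → Q.eval (g i) = (2*(A/4)^n) * (-1:ℝ)^i := by
    intro i hi
    rw [hQ, eval_mul, eval_C, eval_comp]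
    congr 1
    have harg : q.eval (g i) = Real.cos ((i:ℝ) * π / n) := by
      rw [hq, hg]
      simp only [eval_add, eval_mul, eval_C, eval_X]
      field_simp
      ring
    rw [harg, Polynomial.Chebyshev.T_real_cos]
    have hn0 : (n:ℝ) ≠ 0 := by positivity
    have h1 : ((n:ℤ):ℝ) * ((i:ℝ) * π / n) = (i:ℝ) * π := by
      push_cast
      field_simp
    rw [h1]
    have h2 := Real.cos_nat_mul_pi_sub 0 i
    simpa using h2
  have hw'_sign : ∀ i, i ≤ n → (-1:ℝ)^i * w' i = |w' i| := by
    intro i hi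
    have hp := polya_prod_sign n g hg_anti i hi
    rw [hw']
    simp only [Lagrange.nodalWeight]
    rw [Finset.prod_inv_distrib]
    set p := ∏ j ∈ (range (n+1)).erase i, (g i - g j) with hpdef
    rcases Nat.even_or_odd i with he | ho
    · rw [he.neg_one_pow] at hp ⊢
      rw [one_mul] at hp ⊢
      rw [abs_of_pos (inv_pos.mpr hp)]
    · rw [ho.neg_one_pow] at hp ⊢
      have hneg : p < 0 := by nlinarith
      rw [abs_of_neg (inv_neg''.mpr hneg)]
      ring
  -- Q-side sum identity
  have hQsum : (1:ℝ) = (2*(A/4)^n) * ∑ i ∈ range (n+1), |w' i| := by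
    have h1 := coeff_interpolate n g hgInj Q hQdeg
    rw [hQcoeff] at h1
    rw [h1, Finset.mul_sum]
    apply Finset.sum_congr rfl
    intro i hi
    simp only [mem_range] at hi
    rw [hQeval i (by omega), mul_assoc, hw'_sign i (by omega)]
  have hpos4 : (0:ℝ) < 2*(A/4)^n := by positivity
  have hMbound : ∀ i ∈ range (n+1), |P.eval (x i)| ≤ M := fun i _ =>
    le_csSup hbdd ⟨x i, hxK i, rfl⟩
  have hM0 : 0 ≤ M := le_trans (abs_nonneg _) (hMbound 0 (by simp))
  have hchain : (1:ℝ) ≤ M * ∑ i ∈ range (n+1), |w' i| := by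
    calc (1:ℝ) = |∑ i ∈ range (n+1), P.eval (x i) * w i| := by rw [← hPcoeff]; norm_num
    _ ≤ ∑ i ∈ range (n+1), |P.eval (x i) * w i| := Finset.abs_sum_le_sum_abs _ _
    _ ≤ ∑ i ∈ range (n+1), M * |w' i| := by
        apply Finset.sum_le_sum
        intro i hi
        rw [abs_mul]
        exact mul_le_mul (hMbound i hi) (habs_w i hi) (abs_nonneg _) hM0
    _ = M * ∑ i ∈ range (n+1), |w' i| := by rw [Finset.mul_sum]
  -- conclude
  have hsum_val : ∑ i ∈ range (n+1), |w' i| = (2*(A/4)^n)⁻¹ := by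
    field_simp at hQsum ⊢
    linarith [hQsum]
  rw [hsum_val] at hchain
  have hfinal : 2*(A/4)^n ≤ M := by
    have h := mul_le_mul_of_nonneg_left hchain hpos4.le
    rw [mul_one] at h
    calc 2*(A/4)^n ≤ 2*(A/4)^n * (M * (2*(A/4)^n)⁻¹) := h
    _ = M := by field_simp
  have heq : A ^ n / 2 ^ (2*n-1) = 2*(A/4)^n := by
    have h4 : (2:ℝ)^(2*n-1) * 2 = 4^n := by
      rw [← pow_succ]
      have : 2*n-1+1 = 2*n := by omega
      rw [this, pow_mul]
      norm_num
    rw [div_pow, ← h4]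
    field_simp
  rw [hA] at heq hfinal ⊢
  rw [heq]
  exact hfinal
end

section
/- If K is compact and L_n(K) is the minimal sup-norm on K of a monic degree-n polynomial, then |K| ≤ 4 · L_n(K)^(1/n). -/
open Polynomial Polynomial.Chebyshev MeasureTheory Real Finset

lemma T_deg_coeff : ∀ m : ℕ, ((T ℝ m).degree ≤ m ∧ (T ℝ (m+1)).degree ≤ m+1)
    ∧ ((T ℝ m).coeff m = (if m = 0 then (1:ℝ) else 2^(m-1)) ∧ (T ℝ (m+1)).coeff (m+1) = 2^m) := by
  intro m
  induction m with
  | zero =>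
    constructor
    · constructor
      · simp [T_zero]
      · show (T ℝ 1).degree ≤ 1
        rw [T_one]; simpa using degree_X_le
    · constructor
      · simp [T_zero]
      · show (T ℝ 1).coeff 1 = 2^0
        rw [T_one]; simp
  | succ k ih =>
    obtain ⟨⟨hd1, hd2⟩, hc1, hc2⟩ := ih
    have hrec : T ℝ ((k:ℤ) + 2) = 2 * X * T ℝ ((k:ℤ)+1) - T ℝ k := T_add_two ℝ k
    have hcast : ((k:ℤ) + 1 + 1) = ((k:ℤ) + 2) := by ring
    have key : T ℝ ((k+2 : ℕ) : ℤ) = 2 * X * T ℝ ((k+1:ℕ) : ℤ) - T ℝ (k : ℤ) := by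
      push_cast
      rw [← hrec]
    have hdeg : (T ℝ ((k+2:ℕ) : ℤ)).degree ≤ (k+2 : ℕ) := by
      rw [key]
      refine le_trans (degree_sub_le _ _) ?_
      rw [sup_le_iff]
      constructor
      · refine le_trans (degree_mul_le _ _) ?_
        have h2X : ((2 * X : ℝ[X])).degree ≤ 1 := by
          have e : (2 * X : ℝ[X]) = C 2 * X := by
            rw [map_ofNat]
          rw [e]
          refine le_trans (degree_mul_le _ _) ?_
          rw [degree_C (two_ne_zero), degree_X]
          simp
        calc (2 * X : ℝ[X]).degree + (T ℝ ((k+1:ℕ):ℤ)).degree ≤ 1 + ((k:ℕ)+1 : ℕ) := by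
              exact add_le_add h2X hd2
          _ ≤ ((k+2:ℕ) : WithBot ℕ) := by
              norm_cast
              omega
      · exact le_trans hd1 (by norm_cast; omega)
    have hcoeff : (T ℝ ((k+2:ℕ):ℤ)).coeff (k+2) = 2^(k+1) := by
      rw [key]
      have h2 : (2 * X * T ℝ ((k+1:ℕ):ℤ)) = C 2 * (X * T ℝ ((k+1:ℕ):ℤ)) := by
        rw [← mul_assoc, map_ofNat]
      rw [coeff_sub, h2, coeff_C_mul, coeff_X_mul,
        coeff_eq_zero_of_degree_lt (lt_of_le_of_lt hd1 (by norm_cast; omega))]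
      push_cast
      rw [hc2]
      ring
    refine ⟨⟨hd2, by exact_mod_cast hdeg⟩, ⟨by simpa using hc2, by exact_mod_cast hcoeff⟩⟩

lemma T_natDegree (m : ℕ) (hm : 1 ≤ m) : (T ℝ m).natDegree = m ∧ (T ℝ m).leadingCoeff = 2^(m-1) := by
  obtain ⟨⟨hd, _⟩, hc, _⟩ := T_deg_coeff m
  rw [if_neg (by omega)] at hc
  have hne : (T ℝ m).coeff m ≠ 0 := by rw [hc]; positivity
  have hnd : (T ℝ m).natDegree = m := by
    have h1 : (T ℝ m).natDegree ≤ m := natDegree_le_iff_degree_le.2 hd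
    have h2 : m ≤ (T ℝ m).natDegree := le_natDegree_of_ne_zero hne
    omega
  exact ⟨hnd, by rw [leadingCoeff, hnd, hc]⟩


noncomputable def lam (n : ℕ) (P : ℝ[X]) : ℝ :=
  1/2 * P.eval 1 + (∑ i ∈ Finset.range (n-1), (-1)^(i+1) * P.eval (Real.cos ((i+1)*π/n)))
    + 1/2 * (-1)^n * P.eval (-1)

lemma lam_add (n : ℕ) (P Q : ℝ[X]) : lam n (P + Q) = lam n P + lam n Q := by
  simp only [lam, eval_add, mul_add, Finset.sum_add_distrib]
  ring

lemma cos_nat_pi (j : ℕ) : Real.cos (j*π) = (-1)^j := by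
  simpa using Real.cos_add_int_mul_pi 0 j

noncomputable def SS (n : ℕ) (α : ℝ) : ℝ :=
  1/2 + (∑ i ∈ Finset.range (n-1), Real.cos ((i+1)*α)) + 1/2 * Real.cos (n*α)

lemma SS_identity (n : ℕ) (hn : 1 ≤ n) (α : ℝ) :
    2 * Real.sin (α/2) * SS n α = Real.sin (n*α) * Real.cos (α/2) := by
  have tsum : (∑ i ∈ Finset.range (n-1), (2*Real.sin (α/2) * Real.cos ((i+1)*α)))
      = Real.sin (((n-1:ℕ)+1/2)*α) - Real.sin (((0:ℕ)+1/2)*α) := by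
    rw [← Finset.sum_range_sub (fun i => Real.sin (((i:ℝ)+1/2)*α))]
    refine Finset.sum_congr rfl fun i _ => ?_
    push_cast
    rw [show ((i:ℝ)+1+1/2)*α = ((i:ℝ)+1)*α + α/2 by ring,
        show ((i:ℝ)+1/2)*α = ((i:ℝ)+1)*α - α/2 by ring,
        Real.sin_add, Real.sin_sub]
    ring
  have expand : 2 * Real.sin (α/2) * SS n α
      = 2*Real.sin (α/2)*(1/2) + (∑ i ∈ Finset.range (n-1), (2*Real.sin (α/2) * Real.cos ((i+1)*α)))
        + 2*Real.sin (α/2)*(1/2 * Real.cos (n*α)) := by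
    rw [SS, mul_add, mul_add, Finset.mul_sum]
  rw [expand, tsum]
  have hc : ((n-1:ℕ):ℝ) = (n:ℝ) - 1 := by
    have := Nat.cast_sub hn (R := ℝ); simpa using this
  rw [hc, Nat.cast_zero,
      show ((n:ℝ)-1+1/2)*α = (n:ℝ)*α - α/2 by ring,
      show ((0:ℝ)+1/2)*α = α/2 by ring,
      Real.sin_sub]
  ring

lemma SS_zero_of (n r : ℕ) (hn : 1 ≤ n) (h1 : 0 < r) (h2 : r < 2*n) :
    SS n ((r:ℝ)*π/n) = 0 := by
  have hn' : (n:ℝ) ≠ 0 := Nat.cast_ne_zero.2 (by omega)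
  have hid := SS_identity n hn ((r:ℝ)*π/n)
  have hsin0 : Real.sin ((n:ℝ)*((r:ℝ)*π/n)) = 0 := by
    rw [show (n:ℝ)*((r:ℝ)*π/n) = (r:ℝ)*π by field_simp]
    exact Real.sin_nat_mul_pi r
  have hspos : 0 < Real.sin ((r:ℝ)*π/n/2) := by
    apply Real.sin_pos_of_pos_of_lt_pi
    · positivity
    · have hr : (r:ℝ) < 2*n := by exact_mod_cast h2
      have hnpos : (0:ℝ) < n := by positivity
      rw [div_div, div_lt_iff₀ (by positivity)]
      nlinarith [Real.pi_pos]
  rw [hsin0, zero_mul] at hid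
  have h2s : (2 * Real.sin ((r:ℝ)*π/n/2)) ≠ 0 := by positivity
  exact (mul_eq_zero.mp hid).resolve_left h2s

lemma SS_zero' (n : ℕ) (hn : 1 ≤ n) : SS n 0 = n := by
  simp [SS]
  have hc : ((n-1:ℕ):ℝ) = (n:ℝ) - 1 := by
    have := Nat.cast_sub hn (R := ℝ); simpa using this
  rw [hc]; ring

lemma SS_twopi (n : ℕ) (hn : 1 ≤ n) : SS n (2*π) = n := by
  have h1 : ∀ i : ℕ, Real.cos (((i:ℝ)+1)*(2*π)) = 1 := by
    intro i
    have := Real.cos_nat_mul_two_pi (i+1)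
    rw [show ((i:ℝ)+1)*(2*π) = ((i+1:ℕ):ℝ)*(2*π) by push_cast; ring]
    exact this
  have h2 : Real.cos ((n:ℝ)*(2*π)) = 1 := Real.cos_nat_mul_two_pi n
  simp only [SS, h1, h2]
  simp
  have hc : ((n-1:ℕ):ℝ) = (n:ℝ) - 1 := by
    have := Nat.cast_sub hn (R := ℝ); simpa using this
  rw [hc]; ring

lemma lam_C_mul (n : ℕ) (c : ℝ) (P : ℝ[X]) : lam n (C c * P) = c * lam n P := by
  simp only [lam, eval_mul, eval_C]
  rw [mul_add, mul_add, Finset.mul_sum]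
  congr 1
  congr 1
  · ring
  · exact Finset.sum_congr rfl fun i _ => by ring
  · ring

lemma lam_T_expand (n m : ℕ) (hn : 1 ≤ n) (hm : m ≤ n) :
    lam n (T ℝ m) = 1/2 * (SS n (((n+m:ℕ):ℝ)*π/n) + SS n (((n-m:ℕ):ℝ)*π/n)) := by
  have hn' : (n:ℝ) ≠ 0 := Nat.cast_ne_zero.2 (by omega)
  have hnode : ∀ i : ℕ, (T ℝ m).eval (Real.cos (((i:ℝ)+1)*π/n)) = Real.cos ((m:ℝ)*(((i:ℝ)+1)*π/n)) := by
    intro i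
    have := Polynomial.Chebyshev.T_real_cos (((i:ℝ)+1)*π/n) m
    push_cast at this ⊢
    exact this
  have h1 : (T ℝ m).eval 1 = 1 := by
    have := Polynomial.Chebyshev.T_real_cos 0 m
    simp at this
    simpa using this
  have hm1 : (T ℝ m).eval (-1) = (-1)^m := by
    have := Polynomial.Chebyshev.T_real_cos π m
    rw [Real.cos_pi] at this
    rw [this]
    push_cast
    exact cos_nat_pi m
  have node : ∀ i : ℕ, (-1:ℝ)^(i+1) * Real.cos ((m:ℝ)*(((i:ℝ)+1)*π/n))
      = 1/2 * (Real.cos (((i:ℝ)+1)*(((n+m:ℕ):ℝ)*π/n)) + Real.cos (((i:ℝ)+1)*(((n-m:ℕ):ℝ)*π/n))) := by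
    intro i
    have e1 : ((-1:ℝ))^(i+1) = Real.cos (((i:ℝ)+1)*π) := by
      rw [show ((i:ℝ)+1)*π = ((i+1:ℕ):ℝ)*π by push_cast; ring, cos_nat_pi]
    have hnm : ((n-m:ℕ):ℝ) = (n:ℝ) - m := by
      have := Nat.cast_sub hm (R := ℝ); simpa using this
    rw [e1, hnm]
    push_cast
    rw [show ((i:ℝ)+1)*(((n:ℝ)+m)*π/n) = ((i:ℝ)+1)*π + (m:ℝ)*(((i:ℝ)+1)*π/n) by field_simp,
        show ((i:ℝ)+1)*(((n:ℝ)-m)*π/n) = ((i:ℝ)+1)*π - (m:ℝ)*(((i:ℝ)+1)*π/n) by field_simp,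
        Real.cos_add, Real.cos_sub]
    ring
  have endpt : (1/2 : ℝ) * (-1)^n * (-1)^m
      = 1/2 * (1/2 * Real.cos ((n:ℝ)*(((n+m:ℕ):ℝ)*π/n)) + 1/2 * Real.cos ((n:ℝ)*(((n-m:ℕ):ℝ)*π/n))) := by
    have e1 : (n:ℝ)*(((n+m:ℕ):ℝ)*π/n) = ((n+m:ℕ):ℝ)*π := by field_simp
    have e2 : (n:ℝ)*(((n-m:ℕ):ℝ)*π/n) = ((n-m:ℕ):ℝ)*π := by field_simp
    rw [e1, e2, cos_nat_pi, cos_nat_pi]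
    have : ((-1:ℝ))^(n-m) = (-1)^(n+m) := by
      rw [show n+m = (n-m) + 2*m by omega, pow_add]
      simp [pow_mul]
    rw [this, pow_add]
    ring
  simp only [lam, SS, h1, hm1]
  rw [Finset.sum_congr rfl (fun i _ => by rw [hnode i, node i])]
  simp only [mul_add, Finset.sum_add_distrib, ← Finset.mul_sum]
  rw [mul_one]
  have := endpt
  linarith [endpt]

lemma lam_T_lt (n m : ℕ) (hn : 1 ≤ n) (hm : m < n) : lam n (T ℝ m) = 0 := by
  rw [lam_T_expand n m hn (le_of_lt hm),
      SS_zero_of n (n+m) hn (by omega) (by omega),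
      SS_zero_of n (n-m) hn (by omega) (by omega)]
  norm_num

lemma lam_T_self (n : ℕ) (hn : 1 ≤ n) : lam n (T ℝ n) = n := by
  have hn' : (n:ℝ) ≠ 0 := Nat.cast_ne_zero.2 (by omega)
  rw [lam_T_expand n n hn le_rfl]
  have e1 : ((n+n:ℕ):ℝ)*π/n = 2*π := by push_cast; field_simp; ring
  have e2 : ((n-n:ℕ):ℝ)*π/n = 0 := by simp
  rw [e1, e2, SS_twopi n hn, SS_zero' n hn]
  ring

lemma lam_zero_poly (n : ℕ) : lam n (0 : ℝ[X]) = 0 := by simp [lam]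

lemma lam_lowdeg (n : ℕ) (hn : 1 ≤ n) : ∀ P : ℝ[X], P.degree < (n:ℕ) → lam n P = 0 := by
  suffices H : ∀ d : ℕ, ∀ P : ℝ[X], P.natDegree ≤ d → P.degree < (n:ℕ) → lam n P = 0 by
    exact fun P hP => H P.natDegree P le_rfl hP
  intro d
  induction d with
  | zero =>
    intro P hP0 _
    have hPC : P = C (P.coeff 0) := Polynomial.eq_C_of_natDegree_le_zero hP0
    rw [hPC, show C (P.coeff 0) = C (P.coeff 0) * 1 by ring,
        show (1:ℝ[X]) = T ℝ 0 from (T_zero ℝ).symm, lam_C_mul]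
    have h00 := lam_T_lt n 0 hn (by omega)
    norm_num at h00
    rw [T_zero, h00, mul_zero]
  | succ d ih =>
    intro P hP0 hdeg
    by_cases h0 : P = 0
    · rw [h0, lam_zero_poly]
    by_cases hm0 : P.natDegree = 0
    · have hPC : P = C (P.coeff 0) := Polynomial.eq_C_of_natDegree_le_zero (le_of_eq hm0)
      rw [hPC, show C (P.coeff 0) = C (P.coeff 0) * 1 by ring,
          show (1:ℝ[X]) = T ℝ 0 from (T_zero ℝ).symm, lam_C_mul]
      have h00 := lam_T_lt n 0 hn (by omega)
      norm_num at h00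
      rw [T_zero, h00, mul_zero]
    set m := P.natDegree with hm
    have hmn : m < n := (Polynomial.natDegree_lt_iff_degree_lt h0).2 hdeg
    obtain ⟨hTd, hTlc⟩ := T_natDegree m (by omega)
    have hTne : T ℝ (m:ℤ) ≠ 0 :=
      Polynomial.leadingCoeff_ne_zero.1 (by rw [hTlc]; positivity)
    set c := P.leadingCoeff / 2^(m-1) with hc
    have hcne : c ≠ 0 :=
      div_ne_zero (Polynomial.leadingCoeff_ne_zero.2 h0) (by positivity)
    set Q := P - C c * T ℝ m with hQdef
    have hQ : Q.degree < (m : WithBot ℕ) := by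
      have hdm : P.degree = (m : WithBot ℕ) := Polynomial.degree_eq_natDegree h0
      rw [← hdm]
      apply Polynomial.degree_sub_lt
      · rw [Polynomial.degree_C_mul hcne, hdm,
          Polynomial.degree_eq_natDegree hTne, hTd]
      · exact h0
      · rw [Polynomial.leadingCoeff_mul, Polynomial.leadingCoeff_C, hTlc, hc,
          div_mul_cancel₀ _ (by positivity : ((2:ℝ)^(m-1)) ≠ 0)]
    have hQnd : Q.natDegree ≤ d := by
      by_cases hQ0 : Q = 0
      · simp [hQ0]
      · have := (Polynomial.natDegree_lt_iff_degree_lt hQ0).2 hQ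
        omega
    have hPQ : P = Q + C c * T ℝ m := by rw [hQdef]; ring
    have hQdeg : Q.degree < (n : ℕ) :=
      lt_trans hQ (by exact_mod_cast Nat.cast_lt.2 hmn)
    rw [hPQ, lam_add, lam_C_mul, ih Q hQnd hQdeg, lam_T_lt n m hn hmn]
    ring

lemma lam_monic (n : ℕ) (hn : 1 ≤ n) (P : ℝ[X]) (hmonic : P.Monic)
    (hdeg : P.natDegree = n) : lam n P = n / 2^(n-1) := by
  obtain ⟨hTd, hTlc⟩ := T_natDegree n hn
  have hTne : T ℝ (n:ℤ) ≠ 0 :=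
    Polynomial.leadingCoeff_ne_zero.1 (by rw [hTlc]; positivity)
  have hPne : P ≠ 0 := hmonic.ne_zero
  have hcne : ((2:ℝ)^(n-1)) ≠ 0 := by positivity
  set Q := C ((2:ℝ)^(n-1)) * P - T ℝ n with hQdef
  have hQ : Q.degree < (n : ℕ) := by
    have hdT : (T ℝ (n:ℤ)).degree = (n : WithBot ℕ) := by
      rw [Polynomial.degree_eq_natDegree hTne, hTd]
    have hdP : (C ((2:ℝ)^(n-1)) * P).degree = (n : WithBot ℕ) := by
      rw [Polynomial.degree_C_mul hcne, Polynomial.degree_eq_natDegree hPne, hdeg]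
    rw [← hdP]
    apply Polynomial.degree_sub_lt
    · rw [hdP, hdT]
    · exact mul_ne_zero (by simpa using hcne) hPne
    · rw [Polynomial.leadingCoeff_mul, Polynomial.leadingCoeff_C, hTlc,
        hmonic.leadingCoeff, mul_one]
  have hsplit : C ((2:ℝ)^(n-1)) * P = Q + T ℝ n := by rw [hQdef]; ring
  have := lam_lowdeg n hn Q hQ
  have h2 : lam n (C ((2:ℝ)^(n-1)) * P) = (n:ℝ) := by
    rw [hsplit, lam_add, this, lam_T_self n hn, zero_add]
  rw [lam_C_mul] at h2
  field_simp at h2 ⊢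
  linarith

lemma exists_node (n : ℕ) (hn : 1 ≤ n) (P : ℝ[X]) (hmonic : P.Monic)
    (hdeg : P.natDegree = n) :
    ∃ x ∈ Set.Icc (-1:ℝ) 1, ((1:ℝ)/2)^n ≤ |P.eval x| := by
  by_contra hcon
  push_neg at hcon
  have hb : ∀ x ∈ Set.Icc (-1:ℝ) 1, |P.eval x| ≤ (1/2:ℝ)^n :=
    fun x hx => le_of_lt (hcon x hx)
  have h1 : |P.eval 1| ≤ (1/2:ℝ)^n := hb 1 ⟨by norm_num, le_rfl⟩
  have h2 : |P.eval (-1)| ≤ (1/2:ℝ)^n := hb (-1) ⟨le_rfl, by norm_num⟩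
  have h3 : ∀ i ∈ Finset.range (n-1),
      |(-1:ℝ)^(i+1) * P.eval (Real.cos (((i:ℝ)+1)*π/n))| ≤ (1/2:ℝ)^n := by
    intro i _
    rw [abs_mul, abs_pow, abs_neg, abs_one, one_pow, one_mul]
    exact hb _ ⟨Real.neg_one_le_cos _, Real.cos_le_one _⟩
  have hsum : |∑ i ∈ Finset.range (n-1), (-1:ℝ)^(i+1) * P.eval (Real.cos (((i:ℝ)+1)*π/n))|
      ≤ ((n:ℝ)-1) * (1/2:ℝ)^n := by
    calc _ ≤ ∑ i ∈ Finset.range (n-1),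
          |(-1:ℝ)^(i+1) * P.eval (Real.cos (((i:ℝ)+1)*π/n))| :=
        Finset.abs_sum_le_sum_abs _ _
      _ ≤ (Finset.range (n-1)).card • (1/2:ℝ)^n := Finset.sum_le_card_nsmul _ _ _ h3
      _ = ((n-1:ℕ):ℝ) * (1/2:ℝ)^n := by rw [Finset.card_range, nsmul_eq_mul]
      _ = ((n:ℝ)-1) * (1/2:ℝ)^n := by
          congr 1
          have := Nat.cast_sub hn (R := ℝ); simpa using this
  have ha : |1/2 * P.eval 1| ≤ 1/2 * (1/2:ℝ)^n := by
    rw [abs_mul]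
    rw [show |(1/2:ℝ)| = 1/2 by norm_num]
    gcongr
  have hc : |1/2 * (-1:ℝ)^n * P.eval (-1)| ≤ 1/2 * (1/2:ℝ)^n := by
    rw [abs_mul, abs_mul, abs_pow, abs_neg, abs_one, one_pow, mul_one]
    rw [show |(1/2:ℝ)| = 1/2 by norm_num]
    gcongr
  have habs : |lam n P| ≤ |1/2 * P.eval 1|
      + |∑ i ∈ Finset.range (n-1), (-1:ℝ)^(i+1) * P.eval (Real.cos (((i:ℝ)+1)*π/n))|
      + |1/2 * (-1:ℝ)^n * P.eval (-1)| := by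
    rw [lam]
    refine (abs_add_le _ _).trans ?_
    gcongr
    exact abs_add_le _ _
  have hlam : |lam n P| ≤ (n:ℝ) * (1/2:ℝ)^n := by
    have : (1/2 + ((n:ℝ)-1) + 1/2) * (1/2:ℝ)^n = (n:ℝ) * (1/2:ℝ)^n := by ring
    nlinarith [ha, hc, habs, hsum]
  rw [lam_monic n hn P hmonic hdeg] at hlam
  have hpos : (0:ℝ) < (n:ℝ) := by exact_mod_cast hn
  have hp2 : (0:ℝ) < 2^(n-1) := by positivity
  rw [abs_of_pos (by positivity)] at hlam
  have hpow : (2:ℝ)^n = 2^(n-1) * 2 := by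
    rw [← pow_succ]
    congr 1
    omega
  have key : (n:ℝ)/2^(n-1) ≤ (n:ℝ)/(2^n) := by
    calc (n:ℝ)/2^(n-1) ≤ (n:ℝ) * (1/2:ℝ)^n := hlam
      _ = (n:ℝ)/2^n := by rw [div_pow, one_pow, mul_one_div]
  rw [div_le_div_iff₀ (by positivity) (by positivity), hpow] at key
  nlinarith [hpos, hp2]


noncomputable def gK (K : Set ℝ) (x : ℝ) : ℝ := (volume (K ∩ Set.Iic x)).toReal

lemma gK_fin (K : Set ℝ) (hK : IsCompact K) (A : Set ℝ) : volume (K ∩ A) ≠ ⊤ :=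
  (lt_of_le_of_lt (measure_mono Set.inter_subset_left) hK.measure_lt_top).ne

lemma gK_split (K : Set ℝ) (hK : IsCompact K) {x y : ℝ} (hxy : x ≤ y) :
    gK K y = gK K x + (volume (K ∩ Set.Ioc x y)).toReal := by
  have hsplit : K ∩ Set.Iic y = (K ∩ Set.Iic x) ∪ (K ∩ Set.Ioc x y) := by
    rw [← Set.inter_union_distrib_left, Set.Iic_union_Ioc_eq_Iic hxy]
  have hdisj : Disjoint (K ∩ Set.Iic x) (K ∩ Set.Ioc x y) :=
    ((Set.Iic_disjoint_Ioc le_rfl).mono Set.inter_subset_right Set.inter_subset_right)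
  have hmeas : MeasurableSet (K ∩ Set.Ioc x y) :=
    (hK.isClosed.measurableSet).inter measurableSet_Ioc
  rw [gK, hsplit, measure_union hdisj hmeas,
    ENNReal.toReal_add (gK_fin K hK _) (gK_fin K hK _)]
  rfl

lemma gK_mono (K : Set ℝ) (hK : IsCompact K) {x y : ℝ} (hxy : x ≤ y) : gK K x ≤ gK K y := by
  rw [gK_split K hK hxy]
  have : (0:ℝ) ≤ (volume (K ∩ Set.Ioc x y)).toReal := ENNReal.toReal_nonneg
  linarith

lemma gK_lip (K : Set ℝ) (hK : IsCompact K) (x y : ℝ) : |gK K x - gK K y| ≤ |x - y| := by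
  wlog hxy : y ≤ x generalizing x y
  · rw [abs_sub_comm, abs_sub_comm x y]; exact this y x (le_of_not_ge hxy)
  rw [abs_of_nonneg (by linarith [gK_mono K hK hxy]), abs_of_nonneg (by linarith)]
  rw [gK_split K hK hxy]
  have hb : (volume (K ∩ Set.Ioc y x)).toReal ≤ x - y := by
    calc (volume (K ∩ Set.Ioc y x)).toReal ≤ (volume (Set.Ioc y x)).toReal := by
          apply ENNReal.toReal_mono
          · rw [Real.volume_Ioc]; exact ENNReal.ofReal_ne_top
          · exact measure_mono Set.inter_subset_right
      _ = x - y := by rw [Real.volume_Ioc, ENNReal.toReal_ofReal (by linarith)]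
  linarith

lemma gK_cont (K : Set ℝ) (hK : IsCompact K) : Continuous (gK K) := by
  apply LipschitzWith.continuous (K := 1)
  apply LipschitzWith.of_dist_le_mul
  intro x y
  rw [Real.dist_eq, Real.dist_eq, NNReal.coe_one, one_mul]
  exact gK_lip K hK x y

lemma gK_sInf (K : Set ℝ) (hK : IsCompact K) (hne : K.Nonempty) : gK K (sInf K) = 0 := by
  have hsub : K ∩ Set.Iic (sInf K) ⊆ {sInf K} := by
    rintro z ⟨hzK, hz⟩
    have h3 : sInf K ≤ z := csInf_le hK.bddBelow hzK
    simp [le_antisymm hz h3]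
  rw [gK]
  have : volume (K ∩ Set.Iic (sInf K)) = 0 :=
    le_antisymm (le_trans (measure_mono hsub) (by simp)) (zero_le)
  rw [this]; rfl

lemma gK_sSup (K : Set ℝ) (hK : IsCompact K) (hne : K.Nonempty) :
    gK K (sSup K) = (volume K).toReal := by
  have : K ∩ Set.Iic (sSup K) = K := by
    apply Set.inter_eq_self_of_subset_left
    intro z hz
    exact le_csSup hK.bddAbove hz
  rw [gK, this]

lemma gK_surj (K : Set ℝ) (hK : IsCompact K) (hne : K.Nonempty) (t : ℝ)
    (h0 : 0 ≤ t) (h1 : t ≤ (volume K).toReal) : ∃ x ∈ K, gK K x = t := by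
  rcases eq_or_lt_of_le h0 with h0' | h0'
  · exact ⟨sInf K, hK.sInf_mem hne, by rw [gK_sInf K hK hne, ← h0']⟩
  rcases eq_or_lt_of_le h1 with h1' | h1'
  · exact ⟨sSup K, hK.sSup_mem hne, by rw [gK_sSup K hK hne, h1']⟩
  set A := {y : ℝ | t ≤ gK K y} with hA
  have hAne : (sSup K) ∈ A := by
    rw [hA, Set.mem_setOf_eq, gK_sSup K hK hne]; exact h1
  have hAbdd : BddBelow A := by
    refine ⟨sInf K, fun y hy => ?_⟩
    by_contra hlt
    push_neg at hlt
    have hsub : K ∩ Set.Iic y = ∅ := by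
      ext z
      simp only [Set.mem_inter_iff, Set.mem_Iic, Set.mem_empty_iff_false, iff_false]
      rintro ⟨hzK, hzy⟩
      have : sInf K ≤ z := csInf_le hK.bddBelow hzK
      linarith
    have : gK K y = 0 := by rw [gK, hsub]; simp
    rw [Set.mem_setOf_eq, this] at hy
    linarith
  have hAclosed : IsClosed A := by
    have : A = (gK K) ⁻¹' (Set.Ici t) := rfl
    rw [this]
    exact IsClosed.preimage (gK_cont K hK) isClosed_Ici
  set x := sInf A with hx
  have hxA : x ∈ A := hAclosed.csInf_mem ⟨_, hAne⟩ hAbdd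
  have hge : t ≤ gK K x := hxA
  have hle : gK K x ≤ t := by
    by_contra hlt
    push_neg at hlt
    -- continuity: find point left of x still in A
    have hcont := (gK_cont K hK).continuousAt (x := x)
    rw [Metric.continuousAt_iff] at hcont
    obtain ⟨δ, hδ, hball⟩ := hcont (gK K x - t) (by linarith)
    have hyd : dist (x - δ/2) x < δ := by
      rw [Real.dist_eq]
      rw [abs_of_nonpos (by linarith)]
      linarith
    have := hball hyd
    rw [Real.dist_eq] at this
    have hy : t ≤ gK K (x - δ/2) := by
      cases' abs_lt.mp this with hl hr
      linarith
    have : x ≤ x - δ/2 := csInf_le hAbdd hy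
    linarith
  have hgx : gK K x = t := le_antisymm hle hge
  refine ⟨x, ?_, hgx⟩
  by_contra hxK
  have hopen : IsOpen Kᶜ := hK.isClosed.isOpen_compl
  rw [Metric.isOpen_iff] at hopen
  obtain ⟨ε, hε, hball⟩ := hopen x hxK
  have hconst : gK K (x - ε/2) = gK K x := by
    rw [gK_split K hK (by linarith : x - ε/2 ≤ x)]
    have : K ∩ Set.Ioc (x - ε/2) x = ∅ := by
      ext z
      simp only [Set.mem_inter_iff, Set.mem_Ioc, Set.mem_empty_iff_false, iff_false]
      rintro ⟨hzK, hz1, hz2⟩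
      have : z ∈ Metric.ball x ε := by
        rw [Metric.mem_ball, Real.dist_eq, abs_lt]; constructor <;> linarith
      exact (hball this) hzK
    rw [this]
    simp
  have : x - ε/2 ∈ A := by rw [hA, Set.mem_setOf_eq, hconst, hgx]
  have := csInf_le hAbdd this
  linarith

lemma mprod_nonneg {α : Type*} (s : Multiset α) (f : α → ℝ) (h : ∀ a ∈ s, 0 ≤ f a) :
    0 ≤ (s.map f).prod := by
  induction s using Multiset.induction_on with
  | empty => simp
  | cons a s ih =>
    rw [Multiset.map_cons, Multiset.prod_cons]
    exact mul_nonneg (h a (Multiset.mem_cons_self a s))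
      (ih fun b hb => h b (Multiset.mem_cons_of_mem hb))

lemma mprod_mono {α : Type*} (s : Multiset α) (f g : α → ℝ)
    (h0 : ∀ a ∈ s, 0 ≤ f a) (h : ∀ a ∈ s, f a ≤ g a) :
    (s.map f).prod ≤ (s.map g).prod := by
  induction s using Multiset.induction_on with
  | empty => simp
  | cons a s ih =>
    rw [Multiset.map_cons, Multiset.prod_cons, Multiset.map_cons, Multiset.prod_cons]
    have hf0 : ∀ b ∈ s, 0 ≤ f b := fun b hb => h0 b (Multiset.mem_cons_of_mem hb)
    apply mul_le_mul (h a (Multiset.mem_cons_self a s))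
      (ih hf0 fun b hb => h b (Multiset.mem_cons_of_mem hb))
      (mprod_nonneg s f hf0)
    exact le_trans (h0 a (Multiset.mem_cons_self a s)) (h a (Multiset.mem_cons_self a s))

lemma mprod_const_mul {α : Type*} (s : Multiset α) (f : α → ℝ) (c : ℝ) :
    (s.map (fun a => c * f a)).prod = c ^ (Multiset.card s) * (s.map f).prod := by
  induction s using Multiset.induction_on with
  | empty => simp
  | cons a s ih =>
    rw [Multiset.map_cons, Multiset.prod_cons, Multiset.map_cons, Multiset.prod_cons, ih,
      Multiset.card_cons, pow_succ]
    ring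

lemma mprod_abs (s : Multiset ℝ) : |s.prod| = (s.map (fun x => |x|)).prod := by
  induction s using Multiset.induction_on with
  | empty => simp
  | cons a s ih => rw [Multiset.map_cons, Multiset.prod_cons, Multiset.prod_cons, abs_mul, ih]

lemma eval_abs_eq_roots_prod (P : ℝ[X]) (hmonic : P.Monic) (n : ℕ) (hdeg : P.natDegree = n)
    (x : ℝ) :
    |P.eval x| = ((P.map (algebraMap ℝ ℂ)).roots.map
      (fun z => ‖(x:ℂ) - z‖)).prod := by
  set Pc := P.map (algebraMap ℝ ℂ) with hPc
  have hmc : Pc.Monic := hmonic.map _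
  have hsplits : Splits Pc :=
    IsAlgClosed.splits Pc
  have heq : Pc = (Pc.roots.map fun a => X - C a).prod :=
    hsplits.eq_prod_roots_of_monic hmc
  have heval : Pc.eval (x:ℂ) = ((P.eval x : ℝ) : ℂ) := by
    rw [hPc, Polynomial.eval_map]
    exact Polynomial.eval₂_at_apply (algebraMap ℝ ℂ) x
  have : ‖Pc.eval (x:ℂ)‖ = |P.eval x| := by
    rw [heval, Complex.norm_real, Real.norm_eq_abs]
  rw [← this]
  conv_lhs => rw [heq]
  rw [Polynomial.eval_multiset_prod, Multiset.map_map]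
  rw [show ‖_‖ = _ from map_multiset_prod (normHom (α := ℂ)) _, Multiset.map_map]
  congr 1
  apply Multiset.map_congr rfl
  intro z _
  simp

lemma key_lemma (K : Set ℝ) (hK : IsCompact K) (hne : K.Nonempty) (n : ℕ) (hn : 1 ≤ n)
    (P : ℝ[X]) (hmonic : P.Monic) (hdeg : P.natDegree = n) :
    ∃ x ∈ K, ((volume K).toReal / 4)^n ≤ |P.eval x| := by
  set ℓ := (volume K).toReal with hℓ
  have hℓ0 : 0 ≤ ℓ := ENNReal.toReal_nonneg
  rcases eq_or_lt_of_le hℓ0 with hz | hpos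
  · obtain ⟨x, hx⟩ := hne
    refine ⟨x, hx, ?_⟩
    rw [← hz, zero_div, zero_pow (by omega)]
    exact abs_nonneg _
  -- roots
  set Pc := P.map (algebraMap ℝ ℂ) with hPc
  set R := Pc.roots with hR
  have hmc : Pc.Monic := hmonic.map _
  have hsplits : Splits Pc :=
    IsAlgClosed.splits Pc
  have hcard : Multiset.card R = n := by
    rw [hR, splits_iff_card_roots.mp hsplits, hPc, hmonic.natDegree_map, hdeg]
  -- the transplanted polynomial
  set hmap : ℝ → ℝ := fun u => (2 * gK K u - ℓ)/ℓ with hhmap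
  set Spoly : ℝ[X] := (R.map (fun z => (X:ℝ[X]) - C (hmap z.re))).prod with hSpoly
  have hSmonic : Spoly.Monic :=
    monic_multiset_prod_of_monic R _ (fun z _ => monic_X_sub_C _)
  have hSdeg : Spoly.natDegree = n := by
    have hmon : ∀ f ∈ R.map (fun z => (X:ℝ[X]) - C (hmap z.re)), Monic f := by
      intro f hf
      rw [Multiset.mem_map] at hf
      obtain ⟨z, _, rfl⟩ := hf
      exact monic_X_sub_C _
    rw [hSpoly, natDegree_multiset_prod_of_monic _ hmon, Multiset.map_map]
    have h1 : ∀ z ∈ R, ((natDegree ∘ fun z => (X:ℝ[X]) - C (hmap z.re)) z) = 1 :=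
      fun z _ => natDegree_X_sub_C _
    rw [Multiset.map_congr rfl h1, Multiset.map_const', Multiset.sum_replicate, hcard,
      smul_eq_mul, mul_one]
  obtain ⟨x₀, hx₀, hSval⟩ := exists_node n hn Spoly hSmonic hSdeg
  -- surjectivity
  have ht : ∃ x ∈ K, gK K x = (x₀ + 1) * ℓ / 2 := by
    apply gK_surj K hK hne
    · have := hx₀.1; nlinarith
    · have := hx₀.2; nlinarith
  obtain ⟨x, hxK, hgx⟩ := ht
  have hhx : hmap x = x₀ := by
    rw [hhmap]
    simp only
    rw [hgx]
    field_simp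
    ring
  refine ⟨x, hxK, ?_⟩
  -- eval of Spoly at x₀
  have hSeval : Spoly.eval x₀ = (R.map (fun z => x₀ - hmap z.re)).prod := by
    rw [hSpoly, Polynomial.eval_multiset_prod, Multiset.map_map]
    congr 1
    apply Multiset.map_congr rfl
    intro z _
    simp
  have hSabs : |Spoly.eval x₀| = (R.map (fun z => |x₀ - hmap z.re|)).prod := by
    rw [hSeval, mprod_abs, Multiset.map_map]
    rfl
  -- lipschitz chain
  have hchain : ∀ z ∈ R, (ℓ/2) * |x₀ - hmap z.re| ≤ ‖(x:ℂ) - z‖ := by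
    intro z _
    have h1 : |x - z.re| ≤ ‖(x:ℂ) - z‖ := by
      have := Complex.abs_re_le_norm ((x:ℂ) - z)
      simpa using this
    have h2 : |hmap x - hmap z.re| ≤ (2/ℓ) * |x - z.re| := by
      rw [hhmap]
      simp only
      rw [show (2 * gK K x - ℓ)/ℓ - (2 * gK K z.re - ℓ)/ℓ = (2/ℓ) * (gK K x - gK K z.re) by
        field_simp; ring]
      rw [abs_mul, abs_of_pos (by positivity : (0:ℝ) < 2/ℓ)]
      exact mul_le_mul_of_nonneg_left (gK_lip K hK x z.re) (by positivity)
    rw [← hhx]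
    calc (ℓ/2) * |hmap x - hmap z.re| ≤ (ℓ/2) * ((2/ℓ) * |x - z.re|) :=
          mul_le_mul_of_nonneg_left h2 (by positivity)
      _ = |x - z.re| := by field_simp
      _ ≤ _ := h1
  -- put it together
  have hstep1 : (R.map (fun z => (ℓ/2) * |x₀ - hmap z.re|)).prod
      ≤ (R.map (fun z => ‖(x:ℂ) - z‖)).prod :=
    mprod_mono R _ _ (fun z _ => by positivity) hchain
  have hstep2 : (R.map (fun z => (ℓ/2) * |x₀ - hmap z.re|)).prod
      = (ℓ/2)^n * (R.map (fun z => |x₀ - hmap z.re|)).prod := by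
    rw [mprod_const_mul, hcard]
  have habs : |P.eval x| = (R.map (fun z => ‖(x:ℂ) - z‖)).prod :=
    eval_abs_eq_roots_prod P hmonic n hdeg x
  rw [habs]
  calc (ℓ/4)^n = (ℓ/2)^n * (1/2)^n := by rw [← mul_pow]; congr 1; ring
    _ ≤ (ℓ/2)^n * |Spoly.eval x₀| :=
        mul_le_mul_of_nonneg_left hSval (by positivity)
    _ = (R.map (fun z => (ℓ/2) * |x₀ - hmap z.re|)).prod := by rw [hstep2, hSabs]
    _ ≤ _ := hstep1

/-- `chebNorm K n` is `L_n(K)`: the infimum over monic real polynomials `P` of degree `n`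
of the sup of `|P|` on `K`. -/
noncomputable def chebNorm (K : Set ℝ) (n : ℕ) : ℝ :=
  sInf {y | ∃ P : Polynomial ℝ, P.Monic ∧ P.natDegree = n ∧
    y = sSup ((fun x => |P.eval x|) '' K)}

/-- For compact `K`, `|K| ≤ 4 · L_n(K)^(1/n)`. -/
theorem measure_le_four_mul_chebNorm_rpow (K : Set ℝ) (hK : IsCompact K) (n : ℕ)
    (hn : 1 ≤ n) :
    (volume K).toReal ≤ 4 * chebNorm K n ^ ((1 : ℝ) / n) := by
  set ℓ := (volume K).toReal with hℓ
  have hℓ0 : 0 ≤ ℓ := ENNReal.toReal_nonneg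
  set S := {y | ∃ P : Polynomial ℝ, P.Monic ∧ P.natDegree = n ∧
    y = sSup ((fun x => |P.eval x|) '' K)} with hS
  have hSne : S.Nonempty :=
    ⟨sSup ((fun x => |(X^n : ℝ[X]).eval x|) '' K), X^n, monic_X_pow n, natDegree_X_pow n, rfl⟩
  have hlow : ∀ y ∈ S, (ℓ/4)^n ≤ y := by
    rintro y ⟨P, hm, hd, rfl⟩
    rcases Set.eq_empty_or_nonempty K with hKe | hKne
    · rw [hKe]
      have : ℓ = 0 := by rw [hℓ, hKe]; simp
      rw [this, Set.image_empty, Real.sSup_empty, zero_div, zero_pow (by omega)]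
    · obtain ⟨x, hx, hval⟩ := key_lemma K hK hKne n hn P hm hd
      have hbdd : BddAbove ((fun x => |P.eval x|) '' K) :=
        (hK.bddAbove_image ((P.continuous.abs).continuousOn))
      calc (ℓ/4)^n ≤ |P.eval x| := hval
        _ ≤ sSup ((fun x => |P.eval x|) '' K) := le_csSup hbdd ⟨x, hx, rfl⟩
  have hcheb : (ℓ/4)^n ≤ chebNorm K n := le_csInf hSne hlow
  have hcheb0 : 0 ≤ chebNorm K n := le_trans (by positivity) hcheb
  have hrpow : (ℓ/4) ≤ chebNorm K n ^ ((1:ℝ)/n) := by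
    have h1 : ((ℓ/4)^n : ℝ) ^ ((1:ℝ)/n) ≤ chebNorm K n ^ ((1:ℝ)/n) :=
      Real.rpow_le_rpow (by positivity) hcheb (by positivity)
    have h2 : ((ℓ/4)^n : ℝ) ^ ((1:ℝ)/n) = ℓ/4 := by
      rw [← Real.rpow_natCast (ℓ/4) n, ← Real.rpow_mul (by positivity)]
      rw [show (n:ℝ) * ((1:ℝ)/n) = 1 by field_simp, Real.rpow_one]
    rwa [h2] at h1
  linarith
end

section
/- If a(n) ∈ [c, C] for all n with 0 < c ≤ C, then for every E ∈ ℝ, liminf_{n→∞} (1/n) log ‖Φ_n(E)‖ ≥ 0; hence if limsup_{n→∞} (1/n) log ‖Φ_n(E)‖ = 0, then (1/n) log ‖Φ_n(E)‖ → 0 and limsup_{n→∞} (1/n) log |tr Φ_n(E)| ≤ 0. -/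
open Matrix Filter

/-- The one-step transfer matrix `[[ (E - b(k))/a(k), -a(k-1)/a(k) ], [1, 0]]`. -/
noncomputable def oneStep (a b : ℕ → ℝ) (E : ℝ) (k : ℕ) : Matrix (Fin 2) (Fin 2) ℝ :=
  !![(E - b k) / a k, -(a (k - 1)) / a k; 1, 0]

/-- The `n`-step transfer matrix `Φ_n(E) = T_n ⋯ T_1`. -/
noncomputable def transfer (a b : ℕ → ℝ) (E : ℝ) : ℕ → Matrix (Fin 2) (Fin 2) ℝ
  | 0 => 1
  | n + 1 => oneStep a b E (n + 1) * transfer a b E n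

/-- The `ℓ²` operator norm of a 2×2 real matrix. -/
noncomputable def opNorm (A : Matrix (Fin 2) (Fin 2) ℝ) : ℝ :=
  ‖Matrix.toEuclideanCLM (𝕜 := ℝ) A‖

lemma opNorm_nonneg' (A : Matrix (Fin 2) (Fin 2) ℝ) : 0 ≤ opNorm A := norm_nonneg _

lemma euclid_norm (y : Fin 2 → ℝ) :
    ‖((WithLp.equiv 2 (Fin 2 → ℝ)).symm y : EuclideanSpace ℝ (Fin 2))‖
      = Real.sqrt (y 0 ^ 2 + y 1 ^ 2) := by
  rw [EuclideanSpace.norm_eq]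
  simp [Fin.sum_univ_two, Real.norm_eq_abs, sq_abs]

lemma Matrix.toEuclideanCLM_piLp_equiv_symm (A : Matrix (Fin 2) (Fin 2) ℝ) (x : Fin 2 → ℝ) :
    Matrix.toEuclideanCLM (𝕜 := ℝ) A ((WithLp.equiv 2 (Fin 2 → ℝ)).symm x)
      = (WithLp.equiv 2 (Fin 2 → ℝ)).symm (Matrix.toLin' A x) := rfl

lemma abs_le_sqrt_left (u v : ℝ) : |u| ≤ Real.sqrt (u ^ 2 + v ^ 2) := by
  rw [← Real.sqrt_sq_eq_abs]
  exact Real.sqrt_le_sqrt (by nlinarith [sq_nonneg v])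

lemma sqrt_add_sq_le (u v : ℝ) : Real.sqrt (u ^ 2 + v ^ 2) ≤ |u| + |v| := by
  have h : u ^ 2 + v ^ 2 ≤ (|u| + |v|) ^ 2 := by
    nlinarith [abs_nonneg u, abs_nonneg v, sq_abs u, sq_abs v]
  calc Real.sqrt (u ^ 2 + v ^ 2) ≤ Real.sqrt ((|u| + |v|) ^ 2) := Real.sqrt_le_sqrt h
    _ = |u| + |v| := Real.sqrt_sq (by positivity)

lemma entry_le_opNorm (A : Matrix (Fin 2) (Fin 2) ℝ) (i j : Fin 2) :
    |A i j| ≤ opNorm A := by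
  have key := (Matrix.toEuclideanCLM (𝕜 := ℝ) A).le_opNorm
    ((WithLp.equiv 2 (Fin 2 → ℝ)).symm (Pi.single j 1))
  rw [Matrix.toEuclideanCLM_piLp_equiv_symm, Matrix.toLin'_apply, euclid_norm, euclid_norm] at key
  have hx : Real.sqrt ((Pi.single j 1 : Fin 2 → ℝ) 0 ^ 2 + (Pi.single j 1 : Fin 2 → ℝ) 1 ^ 2) = 1 := by
    fin_cases j <;> simp
  rw [hx, mul_one] at key
  have hv : ∀ i' : Fin 2, (A *ᵥ Pi.single j 1) i' = A i' j := by
    intro i'; simp [Matrix.mulVec_single]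
  rw [hv 0, hv 1] at key
  refine le_trans ?_ key
  fin_cases i
  · exact abs_le_sqrt_left _ _
  · rw [add_comm]; exact abs_le_sqrt_left _ _

lemma opNorm_le_sum (A : Matrix (Fin 2) (Fin 2) ℝ) :
    opNorm A ≤ |A 0 0| + |A 0 1| + |A 1 0| + |A 1 1| := by
  apply ContinuousLinearMap.opNorm_le_bound _ (by positivity)
  intro x
  have hx : x = (WithLp.equiv 2 (Fin 2 → ℝ)).symm (WithLp.equiv 2 (Fin 2 → ℝ) x) := rfl
  rw [hx, Matrix.toEuclideanCLM_piLp_equiv_symm, Matrix.toLin'_apply, euclid_norm, euclid_norm]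
  set y : Fin 2 → ℝ := WithLp.equiv 2 (Fin 2 → ℝ) x with hy
  set s : ℝ := Real.sqrt (y 0 ^ 2 + y 1 ^ 2) with hs
  have hs0 : 0 ≤ s := Real.sqrt_nonneg _
  have hy0 : |y 0| ≤ s := abs_le_sqrt_left _ _
  have hy1 : |y 1| ≤ s := by rw [hs, add_comm]; exact abs_le_sqrt_left _ _
  have hv : ∀ i : Fin 2, (A *ᵥ y) i = A i 0 * y 0 + A i 1 * y 1 := by
    intro i; simp [Matrix.mulVec, dotProduct, Fin.sum_univ_two]
  rw [hv 0, hv 1]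
  have habs0 : |A 0 0 * y 0 + A 0 1 * y 1| ≤ |A 0 0| * |y 0| + |A 0 1| * |y 1| :=
    (abs_add_le _ _).trans (by rw [abs_mul, abs_mul])
  have habs1 : |A 1 0 * y 0 + A 1 1 * y 1| ≤ |A 1 0| * |y 0| + |A 1 1| * |y 1| :=
    (abs_add_le _ _).trans (by rw [abs_mul, abs_mul])
  have hsq := sqrt_add_sq_le (A 0 0 * y 0 + A 0 1 * y 1) (A 1 0 * y 0 + A 1 1 * y 1)
  nlinarith [abs_nonneg (A 0 0), abs_nonneg (A 0 1), abs_nonneg (A 1 0), abs_nonneg (A 1 1)]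

lemma opNorm_one' : opNorm 1 = 1 := by
  rw [opNorm, _root_.map_one]
  exact norm_one

lemma opNorm_mul_le' (A B : Matrix (Fin 2) (Fin 2) ℝ) :
    opNorm (A * B) ≤ opNorm A * opNorm B := by
  rw [opNorm, _root_.map_mul]
  exact norm_mul_le _ _

lemma limsup_nonpos_of_le_tendsto {g h : ℕ → ℝ}
    (hle : ∀ n, g n ≤ h n) (hh : Tendsto h atTop (nhds 0)) :
    atTop.limsup g ≤ 0 := by
  rw [Filter.limsup_eq]
  set S := {a : ℝ | ∀ᶠ n in atTop, g n ≤ a} with hS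
  have hmem : ∀ ε : ℝ, 0 < ε → ε ∈ S := by
    intro ε hε
    filter_upwards [hh.eventually (eventually_le_nhds hε)] with n hn
    exact (hle n).trans hn
  by_cases hbd : BddBelow S
  · by_contra hcon
    push_neg at hcon
    have h2 := csInf_le hbd (hmem (sInf S / 2) (by linarith))
    linarith
  · rw [csInf_of_not_bddBelow hbd, Real.sInf_empty]

theorem liminf_log_transfer_nonneg (a b : ℕ → ℝ) (c C : ℝ) (hc : 0 < c) (hcC : c ≤ C)
    (ha : ∀ n, a n ∈ Set.Icc c C) (ha0 : a 0 = 1)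
    (hb : ∃ C', ∀ n, |b n| ≤ C') (E : ℝ) :
    0 ≤ atTop.liminf
        (fun n : ℕ => (1 / (n : ℝ)) * Real.log (opNorm (transfer a b E n))) ∧
    (atTop.limsup
        (fun n : ℕ => (1 / (n : ℝ)) * Real.log (opNorm (transfer a b E n))) = 0 →
      Tendsto (fun n : ℕ => (1 / (n : ℝ)) * Real.log (opNorm (transfer a b E n)))
        atTop (nhds 0) ∧
      atTop.limsup
        (fun n : ℕ => (1 / (n : ℝ)) * Real.log |Matrix.trace (transfer a b E n)|) ≤ 0) := by
  obtain ⟨C', hC'⟩ := hb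
  have hC'0 : 0 ≤ C' := (abs_nonneg (b 0)).trans (hC' 0)
  have hCpos : 0 < C := hc.trans_le hcC
  have hapos : ∀ n, 0 < a n := fun n => hc.trans_le (ha n).1
  have haC : ∀ n, a n ≤ C := fun n => (ha n).2
  set f : ℕ → ℝ := fun n : ℕ => (1 / (n : ℝ)) * Real.log (opNorm (transfer a b E n)) with hf
  -- determinant of the transfer matrix
  have hdet : ∀ n, (transfer a b E n).det = 1 / a n := by
    intro n
    induction n with
    | zero => simp [transfer, ha0]
    | succ n ih =>
      have han : a n ≠ 0 := (hapos n).ne'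
      have han1 : a (n + 1) ≠ 0 := (hapos (n + 1)).ne'
      rw [transfer, det_mul, ih, oneStep]
      rw [det_fin_two_of]
      field_simp
      ring_nf; simp
  -- lower bound on the norm
  set m : ℝ := Real.sqrt (1 / (2 * C)) with hm
  have hmpos : 0 < m := Real.sqrt_pos.2 (by positivity)
  have hnorm_lb : ∀ n, m ≤ opNorm (transfer a b E n) := by
    intro n
    set Φ := transfer a b E n with hΦ
    have h1 : 1 / C ≤ |Φ.det| := by
      rw [hdet n, abs_of_pos (by have := hapos n; positivity)]
      exact div_le_div_of_nonneg_left (by norm_num) (hapos n) (haC n)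
    have hdet2 : |Φ.det| ≤ 2 * opNorm Φ ^ 2 := by
      rw [Matrix.det_fin_two]
      have h00 := entry_le_opNorm Φ 0 0
      have h01 := entry_le_opNorm Φ 0 1
      have h10 := entry_le_opNorm Φ 1 0
      have h11 := entry_le_opNorm Φ 1 1
      have habs : |Φ 0 0 * Φ 1 1 - Φ 0 1 * Φ 1 0| ≤ |Φ 0 0| * |Φ 1 1| + |Φ 0 1| * |Φ 1 0| := by
        calc |Φ 0 0 * Φ 1 1 - Φ 0 1 * Φ 1 0| ≤ |Φ 0 0 * Φ 1 1| + |Φ 0 1 * Φ 1 0| :=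
              abs_sub _ _
          _ = |Φ 0 0| * |Φ 1 1| + |Φ 0 1| * |Φ 1 0| := by rw [abs_mul, abs_mul]
      nlinarith [abs_nonneg (Φ 0 0), abs_nonneg (Φ 0 1), abs_nonneg (Φ 1 0), abs_nonneg (Φ 1 1),
        opNorm_nonneg' Φ]
    have h2 : 1 / (2 * C) ≤ opNorm Φ ^ 2 := by
      have h3 : 1 / C ≤ 2 * opNorm Φ ^ 2 := h1.trans hdet2
      have e : 1 / (2 * C) = (1 / C) / 2 := by ring
      linarith
    calc m ≤ Real.sqrt (opNorm Φ ^ 2) := Real.sqrt_le_sqrt h2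
      _ = opNorm Φ := Real.sqrt_sq (opNorm_nonneg' Φ)
  have hnorm_pos : ∀ n, 0 < opNorm (transfer a b E n) := fun n => hmpos.trans_le (hnorm_lb n)
  -- upper bound on the norm
  set L : ℝ := max ((|E| + C') / c + C / c + 1) 1 with hL
  have hL1 : (1 : ℝ) ≤ L := le_max_right _ _
  have hLpos : 0 < L := lt_of_lt_of_le one_pos hL1
  have honeStep : ∀ k, opNorm (oneStep a b E k) ≤ L := by
    intro k
    refine le_trans (opNorm_le_sum _) (le_trans ?_ (le_max_left _ _))
    have e00 : (oneStep a b E k) 0 0 = (E - b k) / a k := rfl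
    have e01 : (oneStep a b E k) 0 1 = -(a (k - 1)) / a k := rfl
    have e10 : (oneStep a b E k) 1 0 = 1 := rfl
    have e11 : (oneStep a b E k) 1 1 = 0 := rfl
    rw [e00, e01, e10, e11]
    have h1 : |(E - b k) / a k| ≤ (|E| + C') / c := by
      rw [abs_div, abs_of_pos (hapos k)]
      apply div_le_div₀ (by positivity) ((abs_sub _ _).trans (by linarith [hC' k])) hc (ha k).1
    have h2 : |(-(a (k - 1))) / a k| ≤ C / c := by
      rw [abs_div, abs_neg, abs_of_pos (hapos (k - 1)), abs_of_pos (hapos k)]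
      exact div_le_div₀ (le_of_lt hCpos) (haC (k - 1)) hc (ha k).1
    simp only [abs_one, abs_zero]
    linarith
  have hnorm_ub : ∀ n, opNorm (transfer a b E n) ≤ L ^ n := by
    intro n
    induction n with
    | zero => simp [transfer, opNorm_one']
    | succ n ih =>
      calc opNorm (transfer a b E (n + 1))
          ≤ opNorm (oneStep a b E (n + 1)) * opNorm (transfer a b E n) :=
            opNorm_mul_le' _ _
        _ ≤ L * L ^ n := by
            apply mul_le_mul (honeStep _) ih (opNorm_nonneg' _) (le_of_lt hLpos)
        _ = L ^ (n + 1) := (pow_succ' L n).symm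
  -- bounds on f
  set m' : ℝ := min m 1 with hm'
  have hm'pos : 0 < m' := lt_min hmpos one_pos
  have hm'le1 : m' ≤ 1 := min_le_right _ _
  have hlogm' : Real.log m' ≤ 0 := Real.log_nonpos (le_of_lt hm'pos) hm'le1
  have hf0 : f 0 = 0 := by simp [hf]
  have flb : ∀ n : ℕ, (1 / (n : ℝ)) * Real.log m' ≤ f n := by
    intro n
    rcases n with _ | n
    · simp [hf0]
    · have hn : (0 : ℝ) < (n + 1 : ℕ) := by positivity
      apply mul_le_mul_of_nonneg_left _ (by positivity)
      exact Real.log_le_log hm'pos ((min_le_left _ _).trans (hnorm_lb _))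
  have flb' : ∀ n, Real.log m' ≤ f n := by
    intro n
    rcases n with _ | n
    · simpa [hf0] using hlogm'
    · refine le_trans ?_ (flb (n + 1))
      have hn1 : (1 : ℝ) / ((n + 1 : ℕ) : ℝ) ≤ 1 := by
        rw [div_le_one (by positivity)]
        exact_mod_cast Nat.one_le_iff_ne_zero.2 (Nat.succ_ne_zero n)
      have hn0 : (0 : ℝ) ≤ 1 / ((n + 1 : ℕ) : ℝ) := by positivity
      nlinarith
  have fub : ∀ n, f n ≤ Real.log L := by
    intro n
    rcases n with _ | n
    · simpa [hf0] using Real.log_nonneg hL1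
    · have hn : (0 : ℝ) < ((n + 1 : ℕ) : ℝ) := by positivity
      have hlog : Real.log (opNorm (transfer a b E (n + 1)))
          ≤ ((n + 1 : ℕ) : ℝ) * Real.log L := by
        rw [← Real.log_pow]
        exact Real.log_le_log (hnorm_pos _) (hnorm_ub _)
      have := mul_le_mul_of_nonneg_left hlog (le_of_lt (show (0:ℝ) < 1 / ((n+1:ℕ):ℝ) by positivity))
      calc f (n + 1) ≤ (1 / ((n + 1 : ℕ) : ℝ)) * (((n + 1 : ℕ) : ℝ) * Real.log L) := this
        _ = Real.log L := by field_simp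
  have hbdd_above : IsBoundedUnder (· ≤ ·) atTop f := isBoundedUnder_of ⟨Real.log L, fub⟩
  have hbdd_below : IsBoundedUnder (· ≥ ·) atTop f := isBoundedUnder_of ⟨Real.log m', flb'⟩
  -- the auxiliary sequence tends to 0
  have hg : Tendsto (fun n : ℕ => (1 / (n : ℝ)) * Real.log m') atTop (nhds 0) := by
    have := tendsto_one_div_atTop_nhds_zero_nat.mul_const (Real.log m')
    simpa using this
  have h1 : 0 ≤ atTop.liminf f := by
    have hgb : ∀ n : ℕ, Real.log m' ≤ (1 / (n : ℝ)) * Real.log m' := by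
      intro n
      rcases n with _ | n
      · simpa using hlogm'
      · have hn1 : (1 : ℝ) / ((n + 1 : ℕ) : ℝ) ≤ 1 := by
          rw [div_le_one (by positivity)]
          exact_mod_cast Nat.one_le_iff_ne_zero.2 (Nat.succ_ne_zero n)
        have hn0 : (0 : ℝ) ≤ 1 / ((n + 1 : ℕ) : ℝ) := by positivity
        nlinarith
    have hle : atTop.liminf (fun n : ℕ => (1 / (n : ℝ)) * Real.log m') ≤ atTop.liminf f :=
      liminf_le_liminf (Eventually.of_forall flb)
        (isBoundedUnder_of ⟨Real.log m', hgb⟩)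
        hbdd_above.isCoboundedUnder_ge
    rwa [hg.liminf_eq] at hle
  refine ⟨h1, fun hls => ?_⟩
  have hli : atTop.liminf f = 0 :=
    le_antisymm (hls ▸ liminf_le_limsup hbdd_above hbdd_below) h1
  have htend : Tendsto f atTop (nhds 0) :=
    tendsto_of_liminf_eq_limsup hli hls hbdd_above hbdd_below
  refine ⟨htend, ?_⟩
  -- trace bound
  set g : ℕ → ℝ := fun n : ℕ => (1 / (n : ℝ)) * Real.log |Matrix.trace (transfer a b E n)|
    with hgdef
  set h : ℕ → ℝ := fun n : ℕ => (1 / (n : ℝ)) * Real.log 2 + max (f n) 0 with hhdef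
  have hgh : ∀ n, g n ≤ h n := by
    intro n
    rcases n with _ | n
    · simp [hgdef, hhdef]
    · have hn : (0 : ℝ) < ((n + 1 : ℕ) : ℝ) := by positivity
      have hn0 : (0 : ℝ) ≤ 1 / ((n + 1 : ℕ) : ℝ) := by positivity
      by_cases htr : Matrix.trace (transfer a b E (n + 1)) = 0
      · have : g (n + 1) = 0 := by simp [hgdef, htr]
        rw [this, hhdef]
        have : 0 ≤ max (f (n + 1)) 0 := le_max_right _ _
        have hlog2 : 0 ≤ Real.log 2 := Real.log_nonneg (by norm_num)
        positivity
      · set Φ := transfer a b E (n + 1) with hΦ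
        have htrabs : 0 < |Matrix.trace Φ| := abs_pos.2 htr
        have htr2 : |Matrix.trace Φ| ≤ 2 * opNorm Φ := by
          rw [Matrix.trace_fin_two]
          have h00 := entry_le_opNorm Φ 0 0
          have h11 := entry_le_opNorm Φ 1 1
          calc |Φ 0 0 + Φ 1 1| ≤ |Φ 0 0| + |Φ 1 1| := abs_add_le _ _
            _ ≤ 2 * opNorm Φ := by linarith
        have hlog : Real.log |Matrix.trace Φ| ≤ Real.log 2 + Real.log (opNorm Φ) := by
          rw [← Real.log_mul (by norm_num) (hnorm_pos (n + 1)).ne']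
          exact Real.log_le_log htrabs htr2
        have := mul_le_mul_of_nonneg_left hlog hn0
        calc g (n + 1) ≤ (1 / ((n + 1 : ℕ) : ℝ)) * (Real.log 2 + Real.log (opNorm Φ)) := this
          _ = (1 / ((n + 1 : ℕ) : ℝ)) * Real.log 2 + f (n + 1) := by rw [mul_add]
          _ ≤ h (n + 1) := by
              have : f (n + 1) ≤ max (f (n + 1)) 0 := le_max_left _ _
              simp only [hhdef]
              linarith
  have hh : Tendsto h atTop (nhds 0) := by
    have hA : Tendsto (fun n : ℕ => (1 / (n : ℝ)) * Real.log 2) atTop (nhds 0) := by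
      simpa using tendsto_one_div_atTop_nhds_zero_nat.mul_const (Real.log 2)
    have hB : Tendsto (fun n : ℕ => max (f n) 0) atTop (nhds (max 0 0)) :=
      htend.max tendsto_const_nhds
    have hAB := hA.add hB
    rw [hhdef]
    simpa using hAB
  exact limsup_nonpos_of_le_tendsto hgh hh
end

section
/- (Chebyshev alternation, uniqueness direction) Let K ⊂ ℝ be compact and P a monic polynomial of degree n such that there exist points E_1 > E_2 > ⋯ > E_{n+1} in K with P(E_k) = (-1)^{k+1} · sup_{E∈K}|P(E)|. Then P attains the infimum in the definition of L_n(K): sup_{K}|P| = L_n(K). -/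
open Polynomial

/-- Chebyshev alternation theorem (sufficiency direction): if a monic polynomial `P` of
degree `n` attains its sup on `K` with alternating signs at `n+1` points
`E_1 > ⋯ > E_{n+1}` of `K` (so `P(E_k) = (-1)^{k+1} sup_K |P|`), then `P` is extremal:
`sup_K |P| = L_n(K)`. -/
theorem alternation_implies_extremal (K : Set ℝ) (hK : IsCompact K) (n : ℕ) (hn : 1 ≤ n)
    (P : Polynomial ℝ) (hP : P.Monic) (hdeg : P.natDegree = n)
    (E : Fin (n + 1) → ℝ) (hE : StrictAnti E) (hEK : ∀ i, E i ∈ K)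
    (halt : ∀ i, P.eval (E i) = (-1) ^ (i : ℕ) * sSup ((fun x => |P.eval x|) '' K)) :
    sSup ((fun x => |P.eval x|) '' K) = chebNorm K n := by
  set M := sSup ((fun x => |P.eval x|) '' K) with hM
  have key : ∀ Q : Polynomial ℝ, Q.Monic → Q.natDegree = n →
      M ≤ sSup ((fun x => |Q.eval x|) '' K) := by
    intro Q hQ hQdeg
    by_contra hlt
    push_neg at hlt
    set N := sSup ((fun x => |Q.eval x|) '' K) with hN
    have hbdd : BddAbove ((fun x => |Q.eval x|) '' K) :=
      (hK.image (continuous_abs.comp Q.continuous)).bddAbove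
    have hQle : ∀ x ∈ K, |Q.eval x| ≤ N := fun x hx => le_csSup hbdd ⟨x, hx, rfl⟩
    set R := P - Q with hR
    have hRE : ∀ i : Fin (n+1), 0 < (-1:ℝ)^(i:ℕ) * R.eval (E i) := by
      intro i
      have h1 : R.eval (E i) = (-1:ℝ)^(i:ℕ) * M - Q.eval (E i) := by
        simp [hR, halt i]
      have h2 : ((-1:ℝ)^(i:ℕ)) * ((-1:ℝ)^(i:ℕ)) = 1 := by
        rw [← pow_add, ← two_mul, pow_mul]; norm_num
      have h3 : (-1:ℝ)^(i:ℕ) * Q.eval (E i) ≤ |Q.eval (E i)| := by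
        calc (-1:ℝ)^(i:ℕ) * Q.eval (E i) ≤ |(-1:ℝ)^(i:ℕ) * Q.eval (E i)| := le_abs_self _
          _ = |Q.eval (E i)| := by
            rw [abs_mul, abs_pow, abs_neg, abs_one, one_pow, one_mul]
      have h4 : |Q.eval (E i)| < M := lt_of_le_of_lt (hQle _ (hEK i)) hlt
      have h5 : (-1:ℝ)^(i:ℕ) * ((-1:ℝ)^(i:ℕ) * M - Q.eval (E i))
          = M - (-1:ℝ)^(i:ℕ) * Q.eval (E i) := by
        rw [mul_sub, ← mul_assoc, h2, one_mul]
      rw [h1, h5]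
      linarith
    have hroot : ∀ i : Fin n, ∃ x ∈ Set.Ioo (E i.succ) (E i.castSucc), R.eval x = 0 := by
      intro i
      have hab : E i.succ < E i.castSucc := hE (Fin.castSucc_lt_succ (i := i))
      have hcont : ContinuousOn (fun x => R.eval x) (Set.Icc (E i.succ) (E i.castSucc)) :=
        R.continuous.continuousOn
      have hb := hRE i.castSucc
      have ha := hRE i.succ
      have hvb : (i.castSucc : ℕ) = (i : ℕ) := rfl
      have hva : (i.succ : ℕ) = (i : ℕ) + 1 := rfl
      rw [hvb] at hb
      rw [hva, pow_succ] at ha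
      rcases Nat.even_or_odd (i : ℕ) with he | ho
      · have hs : (-1:ℝ)^(i:ℕ) = 1 := he.neg_one_pow
        rw [hs] at ha hb
        have h0 : (0:ℝ) ∈ Set.Ioo (R.eval (E i.succ)) (R.eval (E i.castSucc)) :=
          ⟨by linarith, by linarith⟩
        have := intermediate_value_Ioo hab.le hcont h0
        obtain ⟨x, hx, hx0⟩ := this
        exact ⟨x, hx, hx0⟩
      · have hs : (-1:ℝ)^(i:ℕ) = -1 := ho.neg_one_pow
        rw [hs] at ha hb
        have h0 : (0:ℝ) ∈ Set.Ioo (R.eval (E i.castSucc)) (R.eval (E i.succ)) :=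
          ⟨by linarith, by linarith⟩
        have := intermediate_value_Ioo' hab.le hcont h0
        obtain ⟨x, hx, hx0⟩ := this
        exact ⟨x, hx, hx0⟩
    choose r hrmem hrzero using hroot
    have hrinj : Function.Injective r := by
      have hranti : StrictAnti r := by
        intro i j hij
        have hij' : (i : ℕ) < (j : ℕ) := hij
        have h1 : r j < E j.castSucc := (hrmem j).2
        have h2 : E i.succ < r i := (hrmem i).1
        have h3 : E j.castSucc ≤ E i.succ := hE.antitone (by
          rw [Fin.le_def]; simp only [Fin.val_succ, Fin.coe_castSucc]; omega)
        linarith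
      exact hranti.injective
    have hR0 : R ≠ 0 := by
      intro h
      have := hRE 0
      rw [h] at this
      simp at this
    have hdegR : R.natDegree < n := by
      have hdP : P.degree = (n : WithBot ℕ) := by
        rw [degree_eq_natDegree hP.ne_zero, hdeg]
      have hdQ : Q.degree = (n : WithBot ℕ) := by
        rw [degree_eq_natDegree hQ.ne_zero, hQdeg]
      have hlt' : R.degree < P.degree :=
        degree_sub_lt (hdP.trans hdQ.symm) hP.ne_zero
          (by rw [hP.leadingCoeff, hQ.leadingCoeff])
      rw [hdP] at hlt'
      exact (natDegree_lt_iff_degree_lt hR0).mpr hlt'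
    exact hR0 (Polynomial.eq_zero_of_natDegree_lt_card_of_eval_eq_zero R hrinj hrzero
      (by simpa using hdegR))
  have hMmem : M ∈ {y | ∃ P' : Polynomial ℝ, P'.Monic ∧ P'.natDegree = n ∧
      y = sSup ((fun x => |P'.eval x|) '' K)} := ⟨P, hP, hdeg, rfl⟩
  refine le_antisymm ?_ ?_
  · exact le_csInf ⟨M, hMmem⟩ (fun y hy => by
      obtain ⟨Q, hQ, hQd, rfl⟩ := hy
      exact key Q hQ hQd)
  · refine csInf_le ⟨0, fun y hy => ?_⟩ hMmem
    obtain ⟨Q, hQ, hQd, rfl⟩ := hy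
    have hbdd : BddAbove ((fun x => |Q.eval x|) '' K) :=
      (hK.image (continuous_abs.comp Q.continuous)).bddAbove
    exact le_trans (abs_nonneg _) (le_csSup hbdd ⟨E 0, hEK 0, rfl⟩)
end

section
/- Let Δ_n be real polynomials of degree n with leading coefficient A_n^{-n}, A_n ∈ [c, C] with 0 < c ≤ C, whose zeros E_1^{(n)}, …, E_n^{(n)} satisfy: for a subset I_n ⊂ {1,…,n}, every zero with index outside I_n has distance at least d_j^{(n)} ≥ A_n from a fixed interval (E_L, E_R). If Σ ⊂ (E_L, E_R) is measurable with limsup (1/n) log|Δ_n(E)| ≤ 0 uniformly on Σ, and liminf_n #I_n/n > 0, then |Σ| ≤ 4 liminf_n [A_n^n / ∏_{j∉I_n} d_j^{(n)}]^{1/#I_n}. -/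
open MeasureTheory Filter

section Aux
open Polynomial Real

lemma chebT_aux : ∀ k : ℕ, (Chebyshev.T ℝ k).natDegree ≤ k ∧ (Chebyshev.T ℝ k).coeff k = 2^(k-1)
  | 0 => by simp [Chebyshev.T_zero]
  | 1 => by simp [Chebyshev.T_one]
  | (k+2) => by
      have h0 := chebT_aux k
      have h1 := chebT_aux (k+1)
      have hrec : Chebyshev.T ℝ ((k:ℤ)+2) = 2 * X * Chebyshev.T ℝ ((k:ℤ)+1) - Chebyshev.T ℝ k :=
        Chebyshev.T_add_two ℝ k
      have hcast : ((k+2 : ℕ) : ℤ) = (k:ℤ)+2 := by push_cast; ring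
      have hcast1 : ((k+1 : ℕ) : ℤ) = (k:ℤ)+1 := by push_cast; ring
      rw [hcast, hrec, ← hcast1]
      constructor
      · refine le_trans (natDegree_sub_le _ _) ?_
        simp only [max_le_iff]
        refine ⟨le_trans (natDegree_mul_le) ?_, by omega⟩
        have : (2 * X : ℝ[X]).natDegree ≤ 1 := by
          refine le_trans (natDegree_mul_le) ?_
          simp
        omega
      · rw [coeff_sub, coeff_eq_zero_of_natDegree_lt (lt_of_le_of_lt h0.1 (by omega)),
          sub_zero]
        have : (2 * X * Chebyshev.T ℝ ((k+1:ℕ):ℤ)) = Polynomial.C 2 * (X * Chebyshev.T ℝ ((k+1:ℕ):ℤ)) := by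
          rw [show (2:ℝ[X]) = Polynomial.C 2 from (map_ofNat Polynomial.C 2).symm]; ring
        rw [this, coeff_C_mul, coeff_X_mul, h1.2]
        norm_num
        ring

lemma cheb_lower (k : ℕ) (hk : 1 ≤ k) (P : ℝ[X]) (hmon : P.Monic) (hdeg : P.natDegree = k) :
    ∃ s ∈ Set.Icc (-1:ℝ) 1, ((2:ℝ)^(k-1))⁻¹ ≤ |P.eval s| := by
  by_contra hcon
  push_neg at hcon
  have hkR : (0:ℝ) < k := by exact_mod_cast hk
  set b : ℝ := ((2:ℝ)^(k-1))⁻¹ with hb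
  have hbpos : 0 < b := by positivity
  set Cp : ℝ[X] := Polynomial.C b * Chebyshev.T ℝ k with hCp
  have hTd := chebT_aux k
  have hCpcoeff : Cp.coeff k = 1 := by
    rw [hCp, coeff_C_mul, hTd.2, hb]
    field_simp
  have hCpdeg : Cp.natDegree = k := by
    refine le_antisymm (le_trans (natDegree_C_mul_le _ _) hTd.1)
      (le_natDegree_of_ne_zero (by rw [hCpcoeff]; norm_num))
  have hCpne : Cp ≠ 0 := fun h => by simp [h] at hCpcoeff
  have hlc : Cp.leadingCoeff = 1 := by rw [leadingCoeff, hCpdeg, hCpcoeff]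
  set Q : ℝ[X] := Cp - P with hQ
  have hdegQ : Q.degree < (k : WithBot ℕ) := by
    have h1 : Cp.degree = P.degree := by
      rw [degree_eq_natDegree hCpne, degree_eq_natDegree hmon.ne_zero, hCpdeg, hdeg]
    have := degree_sub_lt h1.symm hmon.ne_zero (by rw [hlc, hmon.leadingCoeff])
    rw [degree_eq_natDegree hmon.ne_zero, hdeg] at this
    calc Q.degree = (Cp - P).degree := by rw [hQ]
    _ = (P - Cp).degree := by rw [← degree_neg, neg_sub]
    _ < _ := this
  -- extremal points
  set x : ℕ → ℝ := fun i => Real.cos (i * π / k) with hx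
  have hxmem : ∀ i : ℕ, i ≤ k → x i ∈ Set.Icc (-1:ℝ) 1 := fun i _ =>
    ⟨Real.neg_one_le_cos _, Real.cos_le_one _⟩
  have hxlt : ∀ i j : ℕ, i < j → j ≤ k → x j < x i := by
    intro i j hij hjk
    refine Real.cos_lt_cos_of_nonneg_of_le_pi (by positivity) ?_ ?_
    · rw [div_le_iff₀ hkR]
      have : (j:ℝ) ≤ k := by exact_mod_cast hjk
      nlinarith [Real.pi_pos]
    · have : (i:ℝ) < j := by exact_mod_cast hij
      have hπ := Real.pi_pos
      rw [div_lt_div_iff₀ hkR hkR]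
      exact mul_lt_mul_of_pos_right (mul_lt_mul_of_pos_right this hπ) hkR
  have hCpx : ∀ i : ℕ, Cp.eval (x i) = b * (-1)^i := by
    intro i
    rw [hCp, eval_mul, eval_C, hx]
    congr 1
    have : ((k:ℕ):ℝ) * ((i:ℝ) * π / k) = (i:ℝ) * π := by field_simp
    rw [Polynomial.Chebyshev.T_real_cos]
    push_cast
    rw [this]
    have := Real.cos_nat_mul_pi_sub 0 i
    simpa using this
  have hsign : ∀ i : ℕ, i ≤ k → 0 < (-1:ℝ)^i * Q.eval (x i) := by
    intro i hik
    have h1 := hcon (x i) (hxmem i hik)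
    have h2 := abs_lt.mp h1
    rw [hQ, eval_sub, hCpx i]
    rcases Nat.even_or_odd i with he | ho
    · rw [he.neg_one_pow]; nlinarith [h2.1, h2.2]
    · rw [ho.neg_one_pow]; nlinarith [h2.1, h2.2]
  have hroot : ∀ i : Fin k, ∃ y, y ∈ Set.Ioo (x (i+1)) (x i) ∧ Q.eval y = 0 := by
    intro ⟨i, hik⟩
    simp only
    have hlt : x (i+1) < x i := hxlt i (i+1) (by omega) (by omega)
    have hcont : ContinuousOn (fun y => Q.eval y) (Set.Icc (x (i+1)) (x i)) :=
      (Polynomial.continuous Q).continuousOn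
    have hs1 := hsign i (by omega)
    have hs2 := hsign (i+1) (by omega)
    rcases Nat.even_or_odd i with he | ho
    · have h1 : 0 < Q.eval (x i) := by
        rwa [he.neg_one_pow, one_mul] at hs1
      have h2 : Q.eval (x (i+1)) < 0 := by
        have : Odd (i+1) := Even.add_one he
        rw [this.neg_one_pow] at hs2; linarith
      have := intermediate_value_Ioo hlt.le hcont
      have h0 : (0:ℝ) ∈ Set.Ioo (Q.eval (x (i+1))) (Q.eval (x i)) := ⟨h2, h1⟩
      obtain ⟨y, hy1, hy2⟩ := this h0
      exact ⟨y, hy1, hy2⟩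
    · have h1 : Q.eval (x i) < 0 := by
        rw [ho.neg_one_pow] at hs1; linarith
      have h2 : 0 < Q.eval (x (i+1)) := by
        have : Even (i+1) := ho.add_one
        rwa [this.neg_one_pow, one_mul] at hs2
      have := intermediate_value_Ioo' hlt.le hcont
      have h0 : (0:ℝ) ∈ Set.Ioo (Q.eval (x i)) (Q.eval (x (i+1))) := ⟨h1, h2⟩
      obtain ⟨y, hy1, hy2⟩ := this h0
      exact ⟨y, hy1, hy2⟩
  choose y hy1 hy2 using hroot
  have hdec : ∀ i j : Fin k, (i:ℕ) < (j:ℕ) → y j < y i := by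
    intro i j hlt'
    have h1 : y j < x (j:ℕ) := (hy1 j).2
    have h2 : x ((i:ℕ)+1) < y i := (hy1 i).1
    have h3 : x (j:ℕ) ≤ x ((i:ℕ)+1) := by
      rcases eq_or_lt_of_le (show (i:ℕ)+1 ≤ (j:ℕ) by omega) with h | h
      · exact le_of_eq (by rw [← h])
      · exact (hxlt _ _ h j.2.le).le
    linarith
  have hyinj : Function.Injective y := by
    intro i j hij
    rcases lt_trichotomy (i:ℕ) (j:ℕ) with h|h|h
    · exact absurd hij ((hdec i j h).ne')
    · exact Fin.ext h
    · exact absurd hij ((hdec j i h).ne)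
  set s : Finset ℝ := Finset.image y Finset.univ with hs
  have hscard : s.card = k := by
    rw [hs, Finset.card_image_of_injective _ hyinj, Finset.card_univ, Fintype.card_fin]
  have hQ0 : Q = 0 := by
    refine Polynomial.eq_zero_of_degree_lt_of_eval_finset_eq_zero s ?_ ?_
    · rw [hscard]; exact hdegQ
    · intro z hz
      rw [hs] at hz
      obtain ⟨i, _, rfl⟩ := Finset.mem_image.mp hz
      exact hy2 i
  have hPC : P = Cp := by
    have : Cp - P = 0 := hQ0
    linear_combination (norm := ring_nf) -this
  have h1 := hcon 1 (by norm_num)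
  have : P.eval 1 = b := by
    rw [hPC, hCp, eval_mul, eval_C]
    have : (1:ℝ) = Real.cos 0 := by simp
    rw [this, Polynomial.Chebyshev.T_real_cos]
    simp
  rw [this, abs_of_pos hbpos] at h1
  exact lt_irrefl _ h1

lemma cheb_interval (k : ℕ) (hk : 1 ≤ k) (I : Finset ℕ) (hcard : I.card = k) (v : ℕ → ℝ)
    (α β : ℝ) (hab : α < β) :
    ∃ u ∈ Set.Icc α β, ((β-α)/4)^k ≤ ∏ j ∈ I, |u - v j| := by
  set c0 := (α+β)/2 with hc0
  set h0 := (β-α)/2 with hh0def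
  have hh0 : 0 < h0 := by rw [hh0def]; linarith
  set P : ℝ[X] := ∏ j ∈ I, (X - Polynomial.C ((v j - c0)/h0)) with hP
  have hmon : P.Monic := monic_prod_of_monic _ _ (fun j _ => monic_X_sub_C _)
  have hdeg : P.natDegree = k := by
    rw [hP, natDegree_prod_of_monic _ _ (fun j _ => monic_X_sub_C _)]
    simp [hcard]
  obtain ⟨s, hs, hPs⟩ := cheb_lower k hk P hmon hdeg
  refine ⟨c0 + h0 * s, ⟨?_, ?_⟩, ?_⟩
  · have := hs.1; nlinarith
  · have := hs.2; nlinarith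
  · have heval : |P.eval s| = ∏ j ∈ I, |s - (v j - c0)/h0| := by
      rw [hP, eval_prod, Finset.abs_prod]
      refine Finset.prod_congr rfl fun j _ => by simp
    have hfac : ∀ j ∈ I, |c0 + h0 * s - v j| = h0 * |s - (v j - c0)/h0| := by
      intro j _
      have h' : c0 + h0 * s - v j = h0 * (s - (v j - c0)/h0) := by
        field_simp; ring
      rw [h', abs_mul, abs_of_pos hh0]
    calc ((β-α)/4)^k = h0^k * ((2:ℝ)^k)⁻¹ := by
          rw [show (β-α)/4 = h0/2 by rw [hh0def]; ring, div_pow, div_eq_mul_inv]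
    _ ≤ h0^k * ((2:ℝ)^(k-1))⁻¹ := by
          gcongr <;> first | positivity | omega | norm_num
    _ ≤ h0^k * |P.eval s| := by
          exact mul_le_mul_of_nonneg_left hPs (pow_nonneg hh0.le k)
    _ = ∏ j ∈ I, |c0 + h0*s - v j| := by
          rw [heval, Finset.prod_congr rfl hfac, Finset.prod_mul_distrib,
            Finset.prod_const, hcard]

lemma polya (S : Set ℝ) (hS : MeasurableSet S) (EL ER : ℝ) (hsub : S ⊆ Set.Ioo EL ER)
    (k : ℕ) (hk : 1 ≤ k) (I : Finset ℕ) (hcard : I.card = k) (w : ℕ → ℝ)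
    (r : ℝ) (hr : 0 ≤ r) (hrm : r < (volume S).toReal) :
    ∃ x ∈ S, (r/4)^k ≤ ∏ j ∈ I, |x - w j| := by
  set m := (volume S).toReal with hm
  have hmpos : 0 < m := lt_of_le_of_lt hr hrm
  have hfin : volume S ≠ ⊤ := by
    refine ne_top_of_le_ne_top ?_ (measure_mono hsub)
    rw [Real.volume_Ioo]; exact ENNReal.ofReal_ne_top
  set φ : ℝ → ℝ := fun x => (volume (S ∩ Set.Iic x)).toReal with hφ
  have hfin' : ∀ x : ℝ, volume (S ∩ Set.Iic x) ≠ ⊤ := fun x =>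
    ne_top_of_le_ne_top hfin (measure_mono Set.inter_subset_left)
  have hadd : ∀ a b : ℝ, a ≤ b → φ b = φ a + (volume (S ∩ Set.Ioc a b)).toReal := by
    intro a b hab
    have hU : S ∩ Set.Iic b = (S ∩ Set.Iic a) ∪ (S ∩ Set.Ioc a b) := by
      rw [← Set.inter_union_distrib_left, Set.Iic_union_Ioc_eq_Iic hab]
    have hdisj : Disjoint (S ∩ Set.Iic a) (S ∩ Set.Ioc a b) := by
      refine Set.disjoint_left.mpr fun y hy1 hy2 => ?_
      exact absurd hy2.2.1 (not_lt.mpr hy1.2)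
    rw [hφ]
    simp only
    rw [hU, measure_union hdisj (hS.inter measurableSet_Ioc),
      ENNReal.toReal_add (hfin' a) (ne_top_of_le_ne_top hfin (measure_mono Set.inter_subset_left))]
  have hioc : ∀ a b : ℝ, a ≤ b → (volume (S ∩ Set.Ioc a b)).toReal ≤ b - a := by
    intro a b hab
    calc (volume (S ∩ Set.Ioc a b)).toReal ≤ (volume (Set.Ioc a b)).toReal := by
          refine ENNReal.toReal_mono ?_ (measure_mono Set.inter_subset_right)
          rw [Real.volume_Ioc]; exact ENNReal.ofReal_ne_top
    _ = b - a := by rw [Real.volume_Ioc, ENNReal.toReal_ofReal (by linarith)]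
  have hmono : Monotone φ := by
    intro a b hab
    rw [hadd a b hab]
    have := ENNReal.toReal_nonneg (a := volume (S ∩ Set.Ioc a b))
    linarith
  have habs : ∀ a b : ℝ, |φ a - φ b| ≤ |a - b| := by
    intro a b
    rcases le_total a b with h | h
    · rw [abs_sub_comm (φ a), abs_sub_comm a b,
        abs_of_nonneg (sub_nonneg.2 (hmono h)), abs_of_nonneg (sub_nonneg.2 h)]
      have := hioc a b h
      have := hadd a b h
      linarith
    · rw [abs_of_nonneg (sub_nonneg.2 (hmono h)), abs_of_nonneg (sub_nonneg.2 h)]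
      have := hioc b a h
      have := hadd b a h
      linarith
  have hcont : Continuous φ := by
    refine (LipschitzWith.of_dist_le_mul (K := 1) fun a b => ?_).continuous
    rw [Real.dist_eq, Real.dist_eq, NNReal.coe_one, one_mul]
    exact habs a b
  have hφEL : φ EL = 0 := by
    have : S ∩ Set.Iic EL = ∅ := by
      refine Set.eq_empty_iff_forall_notMem.mpr fun y hy => ?_
      exact absurd hy.2 (not_le.mpr (hsub hy.1).1)
    rw [hφ]; simp only; rw [this]; simp
  have hφER : φ ER = m := by
    have : S ∩ Set.Iic ER = S :=
      Set.inter_eq_self_of_subset_left fun y hy => le_of_lt (hsub hy).2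
    rw [hφ]; simp only; rw [this]
  -- the interval
  set α : ℝ := (m - r)/4 with hα
  set β : ℝ := m - α with hβ
  have hαpos : 0 < α := by rw [hα]; linarith
  have hαβ : α < β := by rw [hβ, hα]; linarith
  have hβm : β < m := by rw [hβ]; linarith
  obtain ⟨u, huIcc, hu⟩ := cheb_interval k hk I hcard (fun j => φ (w j)) α β hαβ
  have hrlt : (r/4)^k < ((β-α)/4)^k := by
    refine pow_lt_pow_left₀ ?_ (by linarith) (by omega)
    rw [hβ, hα]; linarith
  set A : Set ℝ := {x | u ≤ φ x} with hA
  have hERA : ER ∈ A := by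
    rw [hA]; simp only [Set.mem_setOf_eq, hφER]
    linarith [huIcc.2]
  have hbddA : BddBelow A := by
    refine ⟨EL, fun x hx => ?_⟩
    by_contra hxEL
    push_neg at hxEL
    have h1 : φ x ≤ φ EL := hmono hxEL.le
    have h2 : u ≤ φ x := hx
    rw [hφEL] at h1
    linarith [huIcc.1]
  have hAclosed : IsClosed A := isClosed_Ici.preimage hcont
  set x0 := sInf A with hx0
  have hx0A : x0 ∈ A := hAclosed.csInf_mem ⟨ER, hERA⟩ hbddA
  have hφx0 : φ x0 = u := by
    refine le_antisymm ?_ hx0A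
    by_contra hgt
    push_neg at hgt
    obtain ⟨δ, hδ, hball⟩ := Metric.isOpen_iff.mp (isOpen_Ioi.preimage hcont) x0 hgt
    have hmemball : x0 - δ/2 ∈ Metric.ball x0 δ := by
      rw [Metric.mem_ball, Real.dist_eq, show x0 - δ/2 - x0 = -(δ/2) by ring, abs_neg,
        abs_of_nonneg (by linarith : (0:ℝ) ≤ δ/2)]
      linarith
    have hmem : x0 - δ/2 ∈ A := by
      have h' := hball hmemball
      rw [Set.mem_preimage, Set.mem_Ioi] at h'
      exact le_of_lt h'
    have := csInf_le hbddA hmem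
    linarith
  have hx0cl : x0 ∈ closure S := by
    by_contra hncl
    obtain ⟨δ, hδ, hball⟩ := Metric.isOpen_iff.mp isClosed_closure.isOpen_compl x0 hncl
    have hempty : S ∩ Set.Ioc (x0 - δ/2) x0 = ∅ := by
      refine Set.eq_empty_iff_forall_notMem.mpr fun y hy => ?_
      have : y ∈ Metric.ball x0 δ := by
        rw [Metric.mem_ball, Real.dist_eq, abs_sub_lt_iff]
        constructor <;> [linarith [hy.2.2]; linarith [hy.2.1]]
      exact hball this (subset_closure hy.1)
    have := hadd (x0 - δ/2) x0 (by linarith)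
    rw [hempty] at this
    simp at this
    have hmem : x0 - δ/2 ∈ A := by
      rw [hA]; simp only [Set.mem_setOf_eq, ← this, hφx0]; exact le_rfl
    have := csInf_le hbddA hmem
    linarith
  -- conclude
  set g : ℝ → ℝ := fun x => ∏ j ∈ I, |x - w j| with hg
  have hgcont : Continuous g := by
    refine continuous_finset_prod _ fun j _ => ?_
    exact (continuous_id.sub continuous_const).abs
  have hgx0 : (r/4)^k < g x0 := by
    refine lt_of_lt_of_le hrlt (le_trans hu ?_)
    refine Finset.prod_le_prod (fun j _ => abs_nonneg _) fun j _ => ?_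
    rw [← hφx0]
    exact habs x0 (w j)
  obtain ⟨x, hxO, hxS⟩ := _root_.mem_closure_iff.mp hx0cl (g ⁻¹' Set.Ioi ((r/4)^k))
    (isOpen_Ioi.preimage hgcont) hgx0
  exact ⟨x, hxS, le_of_lt hxO⟩

end Aux

/-- Core estimate of Theorem 1.1: if `Δ_n(E) = A_n^{-n} ∏_{j=1}^n (E - Z_j^{(n)})`, where
the zeros with indices outside `I_n` are at distance at least `d_j^{(n)} ≥ A_n` from the
interval `(E_L, E_R)`, and `(1/n) log |Δ_n| ≤ ε_n → 0` uniformly on a measurable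
`Σ ⊆ (E_L, E_R)`, and `liminf #I_n/n > 0`, then
`|Σ| ≤ 4 liminf [A_n^n / ∏_{j ∉ I_n} d_j^{(n)}]^{1/#I_n}`. -/
theorem core_estimate (EL ER : ℝ) (S : Set ℝ) (hS : MeasurableSet S)
    (hSsub : S ⊆ Set.Ioo EL ER)
    (A : ℕ → ℝ) (c C : ℝ) (hc : 0 < c) (hcC : c ≤ C) (hA : ∀ n, A n ∈ Set.Icc c C)
    (Z : ℕ → ℕ → ℝ) (I : ℕ → Finset ℕ) (hI : ∀ n, I n ⊆ Finset.Icc 1 n)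
    (d : ℕ → ℕ → ℝ)
    (hd : ∀ n, ∀ j ∈ Finset.Icc 1 n \ I n,
      A n ≤ d n j ∧ ∀ x ∈ Set.Ioo EL ER, d n j ≤ |Z n j - x|)
    (Δ : ℕ → ℝ → ℝ)
    (hΔ : ∀ n E, Δ n E = (A n ^ n)⁻¹ * ∏ j ∈ Finset.Icc 1 n, (E - Z n j))
    (ε : ℕ → ℝ) (hε : Tendsto ε atTop (nhds 0))
    (hunif : ∀ n : ℕ, 1 ≤ n → ∀ E ∈ S, (1 / (n : ℝ)) * Real.log |Δ n E| ≤ ε n)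
    (hcard : 0 < atTop.liminf (fun n : ℕ => ((I n).card : ℝ) / n)) :
    (volume S).toReal ≤
      4 * atTop.liminf (fun n : ℕ =>
        (A n ^ n / ∏ j ∈ Finset.Icc 1 n \ I n, d n j) ^ (1 / ((I n).card : ℝ))) := by
  set f : ℕ → ℝ := fun n =>
    (A n ^ n / ∏ j ∈ Finset.Icc 1 n \ I n, d n j) ^ (1 / ((I n).card : ℝ)) with hf
  set L := atTop.liminf f with hL
  set m := (volume S).toReal with hm
  -- basic positivity facts
  have hApos : ∀ n, 0 < A n := fun n => lt_of_lt_of_le hc (hA n).1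
  have hdpos : ∀ n, ∀ j ∈ Finset.Icc 1 n \ I n, 0 < d n j := fun n j hj =>
    lt_of_lt_of_le (hApos n) (hd n j hj).1
  have hDpos : ∀ n, 0 < ∏ j ∈ Finset.Icc 1 n \ I n, d n j := fun n =>
    Finset.prod_pos (hdpos n)
  have hbase_pos : ∀ n, 0 < A n ^ n / ∏ j ∈ Finset.Icc 1 n \ I n, d n j := fun n =>
    div_pos (pow_pos (hApos n) n) (hDpos n)
  have hf_nonneg : ∀ n, 0 ≤ f n := fun n => Real.rpow_nonneg (hbase_pos n).le _
  have hcard_le : ∀ n, (I n).card ≤ n := fun n => by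
    have := Finset.card_le_card (hI n)
    simpa [Nat.card_Icc] using this
  have hf_le : ∀ n, f n ≤ max C 1 := by
    intro n
    rcases Nat.eq_zero_or_pos (I n).card with h0 | hpos
    · rw [hf]
      simp only [h0, Nat.cast_zero, div_zero, Real.rpow_zero]
      exact le_max_right _ _
    · have hk0 : ((I n).card : ℝ) ≠ 0 := by positivity
      have hDge : A n ^ (n - (I n).card) ≤ ∏ j ∈ Finset.Icc 1 n \ I n, d n j := by
        have hcardsd : (Finset.Icc 1 n \ I n).card = n - (I n).card := by
          rw [Finset.card_sdiff_of_subset (hI n), Nat.card_Icc]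
          omega
        calc A n ^ (n - (I n).card) = ∏ _j ∈ Finset.Icc 1 n \ I n, A n := by
              rw [Finset.prod_const, hcardsd]
        _ ≤ _ := Finset.prod_le_prod (fun j _ => (hApos n).le) (fun j hj => (hd n j hj).1)
      have hbase_le : A n ^ n / ∏ j ∈ Finset.Icc 1 n \ I n, d n j ≤ A n ^ (I n).card := by
        have h1 : A n ^ n / ∏ j ∈ Finset.Icc 1 n \ I n, d n j
            ≤ A n ^ n / A n ^ (n - (I n).card) :=
          div_le_div_of_nonneg_left (pow_nonneg (hApos n).le n) (pow_pos (hApos n) _) hDge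
        have h2 : A n ^ n / A n ^ (n - (I n).card) = A n ^ (I n).card := by
          rw [div_eq_iff (pow_pos (hApos n) _).ne', ← pow_add]
          congr 1
          have := hcard_le n
          omega
        rw [h2] at h1
        exact h1
      calc f n ≤ (A n ^ (I n).card) ^ (1 / ((I n).card : ℝ)) :=
            Real.rpow_le_rpow (hbase_pos n).le hbase_le (by positivity)
      _ = A n := by
            rw [← Real.rpow_natCast (A n) (I n).card, ← Real.rpow_mul (hApos n).le,
              mul_one_div, div_self hk0, Real.rpow_one]
      _ ≤ max C 1 := le_trans (hA n).2 (le_max_left _ _)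
  have hbddabove : atTop.IsBoundedUnder (· ≤ ·) f :=
    isBoundedUnder_of ⟨max C 1, fun n => hf_le n⟩
  have hbddbelow : atTop.IsBoundedUnder (· ≥ ·) f :=
    isBoundedUnder_of ⟨0, fun n => hf_nonneg n⟩
  have hcobdd : atTop.IsCoboundedUnder (· ≥ ·) f := hbddabove.isCoboundedUnder_ge
  have hL0 : 0 ≤ L := le_liminf_of_le hcobdd (Eventually.of_forall hf_nonneg)
  set Lc := atTop.liminf (fun n : ℕ => ((I n).card : ℝ) / n) with hLc
  have hev1 : ∀ᶠ n in atTop, Lc/2 < ((I n).card : ℝ) / n := by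
    refine eventually_lt_of_lt_liminf (by linarith) ?_
    exact isBoundedUnder_of ⟨0, fun n => by positivity⟩
  by_contra hcon
  push_neg at hcon
  set r : ℝ := (m + 4*L)/2 with hr
  have hr4L : 4*L < r := by rw [hr]; linarith
  have hrm : r < m := by rw [hr]; linarith
  have hrpos : 0 < r := by linarith
  have hclaim : ∀ η : ℝ, 0 < η → r ≤ 4*(L+η)*Real.exp η := by
    intro η hη
    have hfreq : ∃ᶠ n in atTop, f n < L + η :=
      frequently_lt_of_liminf_lt hcobdd (by linarith)
    have hev2 : ∀ᶠ n in atTop, |ε n| < η * (Lc/2) := by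
      have := Metric.tendsto_nhds.mp hε (η * (Lc/2)) (by positivity)
      simpa [Real.dist_eq] using this
    obtain ⟨n, hfn, hkn, hεn, hn1⟩ :=
      (hfreq.and_eventually (hev1.and (hev2.and (eventually_ge_atTop 1)))).exists
    set k := (I n).card with hk
    have hnR : (0:ℝ) < n := by exact_mod_cast Nat.lt_of_lt_of_le Nat.zero_lt_one hn1
    have hkpos : 1 ≤ k := by
      rcases Nat.eq_zero_or_pos k with h0 | h
      · exfalso
        rw [h0] at hkn
        norm_num at hkn
        linarith
      · exact h
    have hkR : (0:ℝ) < k := by exact_mod_cast hkpos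
    obtain ⟨x, hxS, hpol⟩ := polya S hS EL ER hSsub k hkpos (I n) rfl (Z n) r hrpos.le hrm
    set D := ∏ j ∈ Finset.Icc 1 n \ I n, d n j with hD
    -- product chain
    have hprod_le : D ≤ ∏ j ∈ Finset.Icc 1 n \ I n, |x - Z n j| := by
      refine Finset.prod_le_prod (fun j hj => (hdpos n j hj).le) fun j hj => ?_
      rw [abs_sub_comm]
      exact (hd n j hj).2 x (hSsub hxS)
    have hsplit : (∏ j ∈ Finset.Icc 1 n \ I n, |x - Z n j|) * ∏ j ∈ I n, |x - Z n j|
        = |∏ j ∈ Finset.Icc 1 n, (x - Z n j)| := by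
      rw [Finset.abs_prod, Finset.prod_sdiff (hI n)]
    have hΔabs : |Δ n x| = (A n ^ n)⁻¹ * |∏ j ∈ Finset.Icc 1 n, (x - Z n j)| := by
      rw [hΔ n x, abs_mul, abs_inv, abs_pow, abs_of_pos (hApos n)]
    have hlog : Real.log |Δ n x| ≤ n * ε n := by
      have h := hunif n hn1 x hxS
      calc Real.log |Δ n x| = n * ((1/(n:ℝ)) * Real.log |Δ n x|) := by
            field_simp
      _ ≤ n * ε n := mul_le_mul_of_nonneg_left h hnR.le
    have hΔle : |Δ n x| ≤ Real.exp (n * ε n) := by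
      rcases eq_or_lt_of_le (abs_nonneg (Δ n x)) with h0 | h0
      · rw [← h0]; exact (Real.exp_pos _).le
      · rw [← Real.exp_log h0]
        exact Real.exp_le_exp.mpr hlog
    have key : (r/4)^k * D ≤ A n ^ n * Real.exp (n * ε n) := by
      have h1 : (r/4)^k * D ≤ (∏ j ∈ I n, |x - Z n j|) * ∏ j ∈ Finset.Icc 1 n \ I n, |x - Z n j| :=
        mul_le_mul hpol hprod_le (hDpos n).le (Finset.prod_nonneg fun j _ => abs_nonneg _)
      have h2 : (∏ j ∈ I n, |x - Z n j|) * ∏ j ∈ Finset.Icc 1 n \ I n, |x - Z n j|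
          = A n ^ n * |Δ n x| := by
        rw [hΔabs, ← mul_assoc, mul_inv_cancel₀ (pow_pos (hApos n) n).ne', one_mul,
          ← hsplit, mul_comm]
      rw [h2] at h1
      exact le_trans h1 (mul_le_mul_of_nonneg_left hΔle (pow_pos (hApos n) n).le)
    have key2 : (r/4)^k ≤ (A n ^ n / D) * Real.exp (n * ε n) := by
      rw [div_mul_eq_mul_div, le_div_iff₀ (hDpos n)]
      linarith [key]
    -- take k-th root
    have hr4 : (0:ℝ) ≤ r/4 := by linarith
    have hroot : r/4 ≤ ((A n ^ n / D) * Real.exp (n * ε n)) ^ (1/(k:ℝ)) := by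
      have h1 : r/4 = (((r/4)^k : ℝ)) ^ ((1:ℝ)/k) := by
        rw [← Real.rpow_natCast (r/4) k, ← Real.rpow_mul hr4, mul_one_div, div_self (ne_of_gt hkR),
          Real.rpow_one]
      rw [h1]
      exact Real.rpow_le_rpow (by positivity) key2 (one_div_nonneg.mpr hkR.le)
    have hsplit2 : ((A n ^ n / D) * Real.exp (n * ε n)) ^ (1/(k:ℝ))
        = f n * Real.exp (n * ε n * (1/(k:ℝ))) := by
      rw [Real.mul_rpow (hbase_pos n).le (Real.exp_pos _).le,
        Real.rpow_def_of_pos (Real.exp_pos _), Real.log_exp]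
    have hexp_le : Real.exp (n * ε n * (1/(k:ℝ))) ≤ Real.exp η := by
      refine Real.exp_le_exp.mpr ?_
      have h1 : (n:ℝ) * ε n * (1/(k:ℝ)) ≤ (n:ℝ) * |ε n| * (1/(k:ℝ)) := by
        have := le_abs_self (ε n)
        have h2 : (0:ℝ) ≤ (n:ℝ) * (1/(k:ℝ)) := by positivity
        nlinarith
      refine le_trans h1 ?_
      -- n * |ε n| / k ≤ η  since  k > n * Lc/2  and |ε n| < η * Lc/2
      have hkgt : (Lc/2) * n < k := by
        rw [lt_div_iff₀ hnR] at hkn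
        linarith
      have hLcpos : 0 < Lc/2 := by positivity
      rw [mul_one_div, div_le_iff₀ hkR]
      have h3 : (n:ℝ) * |ε n| ≤ (n:ℝ) * (η * (Lc/2)) :=
        mul_le_mul_of_nonneg_left hεn.le hnR.le
      calc (n:ℝ) * |ε n| ≤ (n:ℝ) * (η * (Lc/2)) := h3
      _ = η * ((Lc/2) * n) := by ring
      _ ≤ η * k := by
            exact mul_le_mul_of_nonneg_left hkgt.le hη.le
    have : r/4 ≤ (L + η) * Real.exp η := by
      refine le_trans hroot ?_
      rw [hsplit2]
      exact mul_le_mul hfn.le hexp_le (Real.exp_pos _).le (by linarith)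
    linarith
  -- derive contradiction
  have hF : Tendsto (fun η : ℝ => 4*(L+η)*Real.exp η) (nhds 0) (nhds (4*L)) := by
    have : Continuous (fun η : ℝ => 4*(L+η)*Real.exp η) :=
      (continuous_const.mul (continuous_const.add continuous_id)).mul Real.continuous_exp
    have h := this.tendsto 0
    simpa using h
  have := hF.eventually_lt_const hr4L
  rw [Metric.eventually_nhds_iff] at this
  obtain ⟨δ, hδ, hball⟩ := this
  have hηlt := hball (y := δ/2) (by rw [Real.dist_eq]; rw [abs_of_nonneg (by linarith)]; simp; linarith)
  have := hclaim (δ/2) (by linarith)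
  linarith
end

section
/- (Interpolation derivative formula) Fix distinct points E_1,…,E_m and a function s that is nonzero and differentiable near each E_i. Let 𝒯(E; E_1,…,E_m) = Σ_{i=1}^m ((-1)^i / s(E_i)) ∏_{j≠i} (E − E_j)/(E_i − E_j) + ∏_{i=1}^m (E − E_i). Then for every E* and every k, ∂𝒯(E*; E_1,…,E_m)/∂E_k = −(ℬ_k(E*)/(ℬ_k · s(E_k))) · d/dE|_{E=E_k} [𝒯(E; E_1,…,E_m) s(E)], where ℬ_k(E) = ∏_{j≠k}(E − E_j) and ℬ_k = ℬ_k(E_k). -/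
open Filter Finset

/-- The interpolation polynomial
`𝒯(E; E_1,…,E_m) = Σ_i ((-1)^i / s(E_i)) ∏_{j≠i} (E - E_j)/(E_i - E_j) + ∏_i (E - E_i)`
(with `1`-based signs: the `Fin m` index `i` corresponds to the node `E_{i+1}`). -/
noncomputable def interp (m : ℕ) (s : ℝ → ℝ) (v : Fin m → ℝ) (x : ℝ) : ℝ :=
  (∑ i : Fin m, ((-1 : ℝ) ^ ((i : ℕ) + 1) / s (v i)) *
    ∏ j ∈ Finset.univ.erase i, (x - v j) / (v i - v j)) +
  ∏ i : Fin m, (x - v i)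

/-- Derivative of a product of linear factors. -/
lemma hasDerivAt_prod_sub {m : ℕ} (u : Finset (Fin m)) (E : Fin m → ℝ) (a : ℝ) :
    HasDerivAt (fun t => ∏ j ∈ u, (t - E j))
      (∑ j ∈ u, ∏ l ∈ u.erase j, (a - E l)) a := by
  have h := HasDerivAt.fun_finsetProd (u := u) (f := fun j t => t - E j)
    (f' := fun _ => (1:ℝ)) (x := a)
    (fun i _ => (hasDerivAt_id a).sub_const (E i))
  simpa using h

/-- Interpolation derivative formula (Proposition 4.1):
`∂𝒯(E*;E_1,…,E_m)/∂E_k = -(ℬ_k(E*)/(ℬ_k s(E_k))) d/dE|_{E=E_k} [𝒯(E) s(E)]`,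
where `ℬ_k(E) = ∏_{j≠k}(E - E_j)` and `ℬ_k = ℬ_k(E_k)`. -/
theorem interp_deriv_formula (m : ℕ) (s : ℝ → ℝ) (E : Fin m → ℝ)
    (hinj : Function.Injective E)
    (hs : ∀ i, ∀ᶠ x in nhds (E i), s x ≠ 0 ∧ DifferentiableAt ℝ s x)
    (k : Fin m) (Estar : ℝ) :
    deriv (fun t => interp m s (Function.update E k t) Estar) (E k) =
      -((∏ j ∈ Finset.univ.erase k, (Estar - E j)) /
          ((∏ j ∈ Finset.univ.erase k, (E k - E j)) * s (E k))) *
        deriv (fun x => interp m s E x * s x) (E k) := by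
  obtain ⟨hs0, hsd⟩ := (hs k).self_of_nhds
  set a := E k with ha
  set B := ∏ j ∈ univ.erase k, (Estar - E j) with hB
  set Q := ∏ j ∈ univ.erase k, (a - E j) with hQ
  set QS := ∑ j ∈ univ.erase k, ∏ l ∈ (univ.erase k).erase j, (a - E l) with hQS
  set c : Fin m → ℝ := fun i => (-1 : ℝ) ^ ((i : ℕ) + 1) / s (E i) with hc
  set K : Fin m → ℝ := fun i => ∏ j ∈ (univ.erase i).erase k, (Estar - E j) / (E i - E j)
    with hK
  set M : Fin m → ℝ := fun i => ∏ l ∈ (univ.erase i).erase k, (a - E l) with hM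
  set D : Fin m → ℝ := fun i => ∏ j ∈ univ.erase i, (E i - E j) with hD
  have haek : a - E k = 0 := by rw [ha, sub_self]
  have hsub : ∀ i j : Fin m, i ≠ j → E i - E j ≠ 0 := fun i j hij =>
    sub_ne_zero.2 fun h => hij (hinj h)
  have hQ0 : Q ≠ 0 := by
    rw [hQ, ha]
    exact Finset.prod_ne_zero_iff.2 fun j hj => hsub k j fun h => Finset.ne_of_mem_erase hj h.symm
  have hD0 : ∀ i : Fin m, D i ≠ 0 := fun i => by
    rw [hD]
    exact Finset.prod_ne_zero_iff.2 fun j hj => hsub i j fun h => Finset.ne_of_mem_erase hj h.symm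
  have hM0 : ∀ i : Fin m, M i ≠ 0 := fun i => by
    rw [hM, ha]
    exact Finset.prod_ne_zero_iff.2 fun j hj => hsub k j fun h =>
      (Finset.mem_erase.1 hj).1 h.symm
  -- Step 1: rewrite the LHS function
  have hFeq : (fun t => interp m s (Function.update E k t) Estar) =
      fun t => ((∑ i ∈ univ.erase k,
          c i * ((Estar - t) / (E i - t) * K i))
        + ((-1 : ℝ) ^ ((k : ℕ) + 1) * B / (s t * ∏ j ∈ univ.erase k, (t - E j))))
        + (Estar - t) * B := by
    funext t
    simp only [interp, hc, hK, hB]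
    rw [← Finset.add_sum_erase _ _ (Finset.mem_univ k),
        ← Finset.mul_prod_erase _ _ (Finset.mem_univ k)]
    have hupd : ∀ j : Fin m, j ≠ k → Function.update E k t j = E j := fun j hj =>
      Function.update_of_ne hj _ _
    have hP : ∏ j ∈ univ.erase k, (Estar - Function.update E k t j)
        = ∏ j ∈ univ.erase k, (Estar - E j) :=
      Finset.prod_congr rfl fun j hj => by rw [hupd j (Finset.ne_of_mem_erase hj)]
    have hAk : ((-1 : ℝ) ^ ((k : ℕ) + 1) / s (Function.update E k t k)) *
        ∏ j ∈ univ.erase k,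
          (Estar - Function.update E k t j) /
            (Function.update E k t k - Function.update E k t j)
        = (-1 : ℝ) ^ ((k : ℕ) + 1) * (∏ j ∈ univ.erase k, (Estar - E j)) /
            (s t * ∏ j ∈ univ.erase k, (t - E j)) := by
      rw [Function.update_self]
      rw [Finset.prod_congr rfl fun j hj =>
        (by rw [hupd j (Finset.ne_of_mem_erase hj)] :
          (Estar - Function.update E k t j) / (t - Function.update E k t j)
            = (Estar - E j) / (t - E j))]
      rw [Finset.prod_div_distrib]
      ring
    have hAi : ∀ i ∈ univ.erase k,
        ((-1 : ℝ) ^ ((i : ℕ) + 1) / s (Function.update E k t i)) *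
          ∏ j ∈ univ.erase i,
            (Estar - Function.update E k t j) /
              (Function.update E k t i - Function.update E k t j)
        = ((-1 : ℝ) ^ ((i : ℕ) + 1) / s (E i)) *
            ((Estar - t) / (E i - t) *
              ∏ j ∈ (univ.erase i).erase k, (Estar - E j) / (E i - E j)) := by
      intro i hi
      have hik : i ≠ k := Finset.ne_of_mem_erase hi
      have hki : k ∈ univ.erase i := Finset.mem_erase.2 ⟨fun h => hik h.symm, Finset.mem_univ k⟩
      rw [hupd i hik, ← Finset.mul_prod_erase _ _ hki, Function.update_self]
      congr 2
      exact Finset.prod_congr rfl fun j hj => by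
        rw [hupd j (Finset.mem_erase.1 hj).1]
    rw [hP, hAk, Finset.sum_congr rfl hAi, Function.update_self]
    ring
  -- Step 2: derivative of the LHS
  have hnum : HasDerivAt (fun t : ℝ => Estar - t) (-1) a := by
    simpa using (hasDerivAt_id a).const_sub Estar
  have hLsum : HasDerivAt (fun t => ∑ i ∈ univ.erase k,
      c i * ((Estar - t) / (E i - t) * K i))
      (∑ i ∈ univ.erase k,
        c i * (((-1) * (E i - a) - (Estar - a) * (-1)) / (E i - a) ^ 2 * K i)) a := by
    refine HasDerivAt.fun_sum fun i hi => ?_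
    have hne : E i - a ≠ 0 := by rw [ha]; exact hsub i k (Finset.ne_of_mem_erase hi)
    have hdi : HasDerivAt (fun t : ℝ => E i - t) (-1) a := by
      simpa using (hasDerivAt_id a).const_sub (E i)
    exact ((hnum.div hdi hne).mul_const (K i)).const_mul (c i)
  have hQf : HasDerivAt (fun t => ∏ j ∈ univ.erase k, (t - E j)) QS a := by
    rw [hQS]; exact hasDerivAt_prod_sub _ _ _
  have hden : HasDerivAt (fun t => s t * ∏ j ∈ univ.erase k, (t - E j))
      (deriv s a * Q + s a * QS) a := by
    have := hsd.hasDerivAt.fun_mul hQf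
    rw [hQ, ha] at *
    convert this using 2
  have hdne : s a * ∏ j ∈ univ.erase k, (a - E j) ≠ 0 := by
    rw [← hQ]; exact mul_ne_zero hs0 hQ0
  have hLk : HasDerivAt (fun t => (-1 : ℝ) ^ ((k : ℕ) + 1) * B /
      (s t * ∏ j ∈ univ.erase k, (t - E j)))
      ((0 * (s a * Q) - (-1 : ℝ) ^ ((k : ℕ) + 1) * B * (deriv s a * Q + s a * QS)) /
        (s a * Q) ^ 2) a := by
    have h := (hasDerivAt_const a ((-1 : ℝ) ^ ((k : ℕ) + 1) * B)).fun_div hden hdne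
    convert h using 2
  have hLnode : HasDerivAt (fun t => (Estar - t) * B) ((-1) * B) a := hnum.mul_const B
  have hL : HasDerivAt (fun t => interp m s (Function.update E k t) Estar)
      ((∑ i ∈ univ.erase k,
          c i * (((-1) * (E i - a) - (Estar - a) * (-1)) / (E i - a) ^ 2 * K i))
        + (0 * (s a * Q) - (-1 : ℝ) ^ ((k : ℕ) + 1) * B * (deriv s a * Q + s a * QS)) /
            (s a * Q) ^ 2
        + (-1) * B) a := by
    rw [hFeq]
    exact (hLsum.add hLk).add hLnode
  -- Step 3: derivative of the RHS
  have hGeq : (fun x => interp m s E x * s x) =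
      fun x => ((∑ i : Fin m, c i * ((∏ j ∈ univ.erase i, (x - E j)) / D i))
        + ∏ i : Fin m, (x - E i)) * s x := by
    funext x
    simp only [interp, hc, hD]
    congr 1
    refine congrArg₂ _ (Finset.sum_congr rfl fun i _ => ?_) rfl
    rw [Finset.prod_div_distrib]
  have hT : HasDerivAt (fun x => (∑ i : Fin m, c i * ((∏ j ∈ univ.erase i, (x - E j)) / D i))
      + ∏ i : Fin m, (x - E i))
      ((∑ i : Fin m, c i * ((∑ j ∈ univ.erase i,
          ∏ l ∈ (univ.erase i).erase j, (a - E l)) / D i))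
        + ∑ j : Fin m, ∏ l ∈ univ.erase j, (a - E l)) a := by
    refine HasDerivAt.add (HasDerivAt.fun_sum fun i _ => ?_) ?_
    · exact ((hasDerivAt_prod_sub (univ.erase i) E a).div_const (D i)).const_mul (c i)
    · simpa using hasDerivAt_prod_sub univ E a
  have hG : HasDerivAt (fun x => interp m s E x * s x)
      (((∑ i : Fin m, c i * ((∑ j ∈ univ.erase i,
            ∏ l ∈ (univ.erase i).erase j, (a - E l)) / D i))
          + ∑ j : Fin m, ∏ l ∈ univ.erase j, (a - E l)) * s a
        + ((∑ i : Fin m, c i * ((∏ j ∈ univ.erase i, (a - E j)) / D i))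
          + ∏ i : Fin m, (a - E i)) * deriv s a) a := by
    rw [hGeq]
    exact hT.mul hsd.hasDerivAt
  -- Step 4: simplify the RHS derivative value
  have hzero : ∀ i : Fin m, i ≠ k → ∏ j ∈ univ.erase i, (a - E j) = 0 := fun i hik =>
    Finset.prod_eq_zero (Finset.mem_erase.2 ⟨fun h => hik h.symm, Finset.mem_univ k⟩) haek
  have h1 : ∑ j : Fin m, ∏ l ∈ univ.erase j, (a - E l) = Q := by
    rw [Finset.sum_eq_single_of_mem k (Finset.mem_univ k)
      (fun j _ hjk => hzero j hjk), hQ]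
  have h2 : (∑ i : Fin m, c i * ((∏ j ∈ univ.erase i, (a - E j)) / D i)) = c k := by
    rw [Finset.sum_eq_single_of_mem k (Finset.mem_univ k)
      (fun i _ hik => by rw [hzero i hik, zero_div, mul_zero])]
    have hDk : D k = Q := by simp only [hD, hQ, ha]
    rw [hDk, ← hQ, div_self hQ0, mul_one]
  have h3 : ∏ i : Fin m, (a - E i) = 0 := Finset.prod_eq_zero (Finset.mem_univ k) haek
  have h4 : ∀ i ∈ univ.erase k, (∑ j ∈ univ.erase i,
      ∏ l ∈ (univ.erase i).erase j, (a - E l)) = M i := by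
    intro i hi
    have hik : i ≠ k := Finset.ne_of_mem_erase hi
    have hki : k ∈ univ.erase i := Finset.mem_erase.2 ⟨fun h => hik h.symm, Finset.mem_univ k⟩
    rw [Finset.sum_eq_single_of_mem k hki (fun j hj hjk =>
      Finset.prod_eq_zero (Finset.mem_erase.2 ⟨fun h => hjk h.symm,
        Finset.mem_erase.2 ⟨fun h => hik h.symm, Finset.mem_univ k⟩⟩) haek), hM]
  have h5 : (∑ i : Fin m, c i * ((∑ j ∈ univ.erase i,
      ∏ l ∈ (univ.erase i).erase j, (a - E l)) / D i))
      = c k * (QS / Q) + ∑ i ∈ univ.erase k, c i * (M i / D i) := by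
    have hsc : ∑ i ∈ univ.erase k, c i * ((∑ j ∈ univ.erase i,
        ∏ l ∈ (univ.erase i).erase j, (a - E l)) / D i)
        = ∑ i ∈ univ.erase k, c i * (M i / D i) :=
      Finset.sum_congr rfl fun i hi => by rw [h4 i hi]
    rw [← Finset.add_sum_erase _ _ (Finset.mem_univ k), hsc]
  -- Step 5: conclude
  rw [hL.deriv, hG.deriv, h1, h2, h3, h5]
  have hterm : ∀ i ∈ univ.erase k,
      c i * (((-1) * (E i - a) - (Estar - a) * (-1)) / (E i - a) ^ 2 * K i)
      = (-(B / (Q * s a)) * s a) * (c i * (M i / D i)) := by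
    intro i hi
    have hik : i ≠ k := Finset.ne_of_mem_erase hi
    have hki : k ∈ univ.erase i := Finset.mem_erase.2 ⟨fun h => hik h.symm, Finset.mem_univ k⟩
    have hcomm : (univ.erase k).erase i = (univ.erase i).erase k := Finset.erase_right_comm
    have hBi : B = (Estar - E i) * ∏ j ∈ (univ.erase i).erase k, (Estar - E j) := by
      rw [hB, ← Finset.mul_prod_erase _ _ hi, hcomm]
    have hQi : Q = (a - E i) * M i := by
      rw [hQ, ← Finset.mul_prod_erase _ _ hi, hcomm, hM]
    have hDi : D i = (E i - a) * ∏ j ∈ (univ.erase i).erase k, (E i - E j) := by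
      simp only [hD]
      rw [← Finset.mul_prod_erase _ _ hki, ha]
    have hKi : K i = (∏ j ∈ (univ.erase i).erase k, (Estar - E j)) /
        ∏ j ∈ (univ.erase i).erase k, (E i - E j) := by
      simp only [hK]
      rw [Finset.prod_div_distrib]
    have hia : E i - a ≠ 0 := by rw [ha]; exact hsub i k hik
    have hai : a - E i ≠ 0 := by rw [ha]; exact hsub k i fun h => hik h.symm
    have hPD : (∏ j ∈ (univ.erase i).erase k, (E i - E j)) ≠ 0 :=
      Finset.prod_ne_zero_iff.2 fun j hj => hsub i j fun h =>
        (Finset.mem_erase.1 (Finset.mem_of_mem_erase hj)).1 h.symm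
    rw [hBi, hQi, hDi, hKi]
    have hMi : M i ≠ 0 := hM0 i
    field_simp
    ring
  rw [Finset.sum_congr rfl hterm, ← Finset.mul_sum]
  simp only [hc, ← ha]
  field_simp
  ring
end
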